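/- arXiv:1204.6017 — 4 statements merged into one kernel-verified Lean document; each statement's English description precedes it below -/
import Mathlib

section
/- Let κ ≥ 1 be an integer and let γ₁, …, γ_κ ∈ ℝ∖{0} be such that |γ₁| ≠ |γ_j| for every j = 2, …, κ. Define φ : ℝ → ℂ^κ by φ(t) = (e^{itγ₁}, …, e^{itγ_κ}) and let ν = ∏_{k=2}^∞ cos(π/(2k)). Then for every τ₀ ∈ ℝ, the closure of the convex hull of φ([τ₀, ∞)) contains the set {(νξ, 0, …, 0) : ξ ∈ ℂ, |ξ| = 1}. -/
open Filter

open Real in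
private lemma aux_abs_cos_add_int_mul_pi (x : ℝ) (m : ℤ) :
    |Real.cos (x + m * π)| = |Real.cos x| := by
  have h1 : Real.sin (m * π) = 0 := Real.sin_int_mul_pi m
  have h2 : |Real.cos (m * π)| = 1 := by
    have h := Real.sin_sq_add_cos_sq ((m : ℝ) * π)
    rw [h1] at h
    nlinarith [abs_nonneg (Real.cos ((m:ℝ) * π)), sq_abs (Real.cos ((m:ℝ) * π))]
  rw [Real.cos_add, h1]
  rw [mul_zero, sub_zero, abs_mul, h2, mul_one]

open Real in
private lemma aux_cos_bound (l : ℤ) (δ : ℝ) (hδ : |δ| ≤ π/4) :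
    |Real.cos (π/2 + l*π + δ)| ≤ 4/5 := by
  have h1 : π/2 + l*π + δ = (δ + π/2) + l*π := by ring
  rw [h1, aux_abs_cos_add_int_mul_pi, Real.cos_add_pi_div_two, abs_neg]
  calc |Real.sin δ| ≤ |δ| := Real.abs_sin_le_abs
    _ ≤ π/4 := hδ
    _ ≤ 4/5 := by nlinarith [Real.pi_lt_d2]

open Real in
private lemma aux_net (η : ℝ) (hη : 0 < η) (hη2 : η ≤ π/2) (θ : ℝ) :
    ∃ k : ℕ, |Real.cos (θ + k * η)| ≤ 4/5 := by
  have hπ := Real.pi_pos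
  set l : ℤ := ⌈(θ - π/2)/π⌉ with hl
  set T : ℝ := π/2 + l*π with hT
  have hTθ : θ ≤ T := by
    have := Int.le_ceil ((θ - π/2)/π)
    rw [div_le_iff₀ hπ] at this
    simp only [hT]; linarith
  have h0 : 0 ≤ (T - θ)/η := div_nonneg (by linarith) hη.le
  set kz : ℤ := round ((T - θ)/η) with hkz
  have hkz0 : 0 ≤ kz := by
    rw [hkz, round_eq]
    exact Int.floor_nonneg.2 (by linarith)
  have hrd : |(T - θ)/η - kz| ≤ 1/2 := abs_sub_round _
  refine ⟨kz.toNat, ?_⟩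
  have hcast : ((kz.toNat : ℕ) : ℝ) = (kz : ℝ) := by
    exact_mod_cast congrArg (Int.cast : ℤ → ℝ) (Int.toNat_of_nonneg hkz0)
  have hδ : |θ + (kz.toNat : ℝ) * η - T| ≤ π/4 := by
    have heq : θ + (kz:ℝ) * η - T = -(((T - θ)/η - kz) * η) := by
      field_simp
      ring
    rw [hcast, heq, abs_neg, abs_mul, abs_of_pos hη]
    nlinarith [abs_nonneg ((T - θ)/η - (kz:ℝ))]
  have heq2 : θ + (kz.toNat : ℝ) * η = π/2 + l*π + (θ + (kz.toNat : ℝ) * η - T) := by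
    simp only [hT]; ring
  rw [heq2]
  exact aux_cos_bound l _ hδ

open Real in
private lemma aux_key_step (r : ℝ) (hr : ∀ z : ℤ, r ≠ (z:ℝ)) (θ : ℝ) :
    ∃ k : ℕ, |Real.cos (θ + π * r * k)| ≤ 4/5 := by
  have hπ := Real.pi_pos
  set z : ℤ := round r with hz
  set η : ℝ := π * (r - z) with hη
  have hηne : η ≠ 0 := mul_ne_zero (ne_of_gt hπ) (sub_ne_zero.2 (hr z))
  have hη2 : |η| ≤ π/2 := by
    have h := abs_sub_round r
    rw [hη, abs_mul, abs_of_pos hπ]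
    nlinarith [abs_nonneg (r - (z:ℝ))]
  have hred : ∀ k : ℕ, |Real.cos (θ + π * r * k)| = |Real.cos (θ + k * η)| := by
    intro k
    have h : θ + π * r * k = (θ + k * η) + ((z * k : ℤ) : ℝ) * π := by
      rw [hη]; push_cast; ring
    rw [h, aux_abs_cos_add_int_mul_pi]
  rcases lt_or_gt_of_ne hηne with hneg | hpos
  · obtain ⟨k, hk⟩ := aux_net (-η) (by linarith) (by rw [abs_of_neg hneg] at hη2; linarith)
      (-θ)
    refine ⟨k, ?_⟩
    rw [hred k]
    have h : |Real.cos (θ + k * η)| = |Real.cos (-θ + k * (-η))| := by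
      rw [← Real.cos_neg (θ + k * η)]
      ring_nf
    rw [h]; exact hk
  · obtain ⟨k, hk⟩ := aux_net η hpos (by rw [abs_of_pos hpos] at hη2; linarith) θ
    refine ⟨k, ?_⟩
    rw [hred k]; exact hk

open Real in
private lemma aux_step (γ₁ r : ℝ) (hγ₁ : γ₁ ≠ 0) (hr : ∀ z : ℤ, r ≠ (z:ℝ)) (x : ℝ) :
    ∃ β : ℝ, (∃ n : ℤ, β = x + π * n) ∧ 0 ≤ β * γ₁ ∧ |Real.cos (r * β)| ≤ 4/5 := by
  have hπ := Real.pi_pos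
  rcases lt_or_gt_of_ne hγ₁ with hneg | hpos
  · obtain ⟨M, hM⟩ := exists_nat_ge (x/π)
    obtain ⟨k, hk⟩ := aux_key_step r hr (-(r*x) + π * r * M)
    refine ⟨x - π * (M + k), ⟨-(M+k), by push_cast; ring⟩, ?_, ?_⟩
    · have h1 : x ≤ π * M := by rwa [div_le_iff₀ hπ, mul_comm] at hM
      have h2 : (0:ℝ) ≤ π * k := by positivity
      nlinarith
    · have h : r * (x - π * (M + k)) = -((-(r*x) + π * r * M) + π * r * k) := by
        push_cast; ring
      rw [h, Real.cos_neg]; exact hk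
  · obtain ⟨M, hM⟩ := exists_nat_ge (-x/π)
    obtain ⟨k, hk⟩ := aux_key_step r hr (r*x + π * r * M)
    refine ⟨x + π * (M + k), ⟨(M:ℤ)+k, by push_cast; ring⟩, ?_, ?_⟩
    · have h1 : -x ≤ π * M := by rwa [div_le_iff₀ hπ, mul_comm] at hM
      have h2 : (0:ℝ) ≤ π * k := by positivity
      nlinarith
    · have h : r * (x + π * (M + k)) = (r*x + π * r * M) + π * r * k := by
        push_cast; ring
      rw [h]; exact hk

open Real in
private lemma aux_int_kill (z : ℤ) (hz : 2 ≤ z.natAbs) :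
    ∃ k₀ : ℕ, 2 ≤ k₀ ∧ ∀ n : ℤ, Real.cos ((z:ℝ) * (π/(2*k₀) + π*n)) = 0 := by
  obtain ⟨a, m, hm, hfac⟩ := Nat.exists_eq_two_pow_mul_odd (n := z.natAbs) (by omega)
  have main : ∃ (k₀ : ℕ) (w : ℤ), 2 ≤ k₀ ∧ Odd w ∧ z = (k₀ : ℤ) * w := by
    rcases Nat.eq_zero_or_pos a with ha | ha
    · subst ha
      rw [pow_zero, one_mul] at hfac
      rcases Int.natAbs_eq z with h | h
      · exact ⟨m, 1, by omega, odd_one, by omega⟩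
      · exact ⟨m, -1, by omega, odd_one.neg, by omega⟩
    · rcases Int.natAbs_eq z with h | h
      · refine ⟨2^a, (m:ℤ), ?_, hm.natCast, by rw [h, hfac]; push_cast; ring⟩
        calc 2 = 2^1 := by norm_num
          _ ≤ 2^a := Nat.pow_le_pow_right (by norm_num) ha
      · refine ⟨2^a, -(m:ℤ), ?_, hm.natCast.neg, by rw [h, hfac]; push_cast; ring⟩
        calc 2 = 2^1 := by norm_num
          _ ≤ 2^a := Nat.pow_le_pow_right (by norm_num) ha
  obtain ⟨k₀, w, hk₀2, hw, hzw⟩ := main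
  refine ⟨k₀, hk₀2, fun n => ?_⟩
  rw [Real.cos_eq_zero_iff]
  obtain ⟨c, hc⟩ := hw.add_even (Even.mul_right (even_two.mul_right z) n)
  refine ⟨c, ?_⟩
  have hk0 : (k₀ : ℝ) ≠ 0 := by positivity
  have hzr : (z:ℝ) = (k₀:ℝ) * (w:ℝ) := by exact_mod_cast congrArg (Int.cast : ℤ → ℝ) hzw
  have hcR : (w:ℝ) + 2*z*n = 2*c+1 := by exact_mod_cast congrArg (Int.cast : ℤ → ℝ) hc
  have e1 : (z:ℝ) * (π/(2*k₀)) = w*π/2 := by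
    rw [hzr]; field_simp
  calc (z:ℝ) * (π/(2*k₀) + π*n) = (z:ℝ)*(π/(2*k₀)) + (z:ℝ)*π*n := by ring
    _ = w*π/2 + (z:ℝ)*π*n := by rw [e1]
    _ = ((w:ℝ) + 2*z*n)*π/2 := by ring
    _ = (2*c+1)*π/2 := by rw [hcR]

private lemma aux_half_sum (u : ℝ) :
    (1 + Complex.exp (Complex.I * u)) / 2 =
      Complex.exp (Complex.I * ((u/2 : ℝ) : ℂ)) * ((Real.cos (u/2) : ℝ) : ℂ) := by
  rw [Complex.ofReal_cos, Complex.cos]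
  have h1 : Complex.exp (Complex.I * ((u/2:ℝ):ℂ)) * Complex.exp (((u/2:ℝ):ℂ) * Complex.I)
      = Complex.exp (Complex.I * u) := by
    rw [← Complex.exp_add]; congr 1; push_cast; ring
  have h2 : Complex.exp (Complex.I * ((u/2:ℝ):ℂ)) * Complex.exp (-(((u/2:ℝ):ℂ)) * Complex.I)
      = 1 := by
    rw [← Complex.exp_add]
    have h : Complex.I * ((u/2:ℝ):ℂ) + -(((u/2:ℝ):ℂ)) * Complex.I = 0 := by ring
    rw [h, Complex.exp_zero]
  rw [← mul_div_assoc, mul_add, h1, h2]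
  ring

private lemma aux_factor_abs (u : ℝ) :
    ‖(1 + Complex.exp (Complex.I * u)) / 2‖ = |Real.cos (u/2)| := by
  rw [aux_half_sum u, norm_mul, Complex.norm_real, Real.norm_eq_abs, Complex.norm_exp]
  have h : (Complex.I * ((u/2 : ℝ) : ℂ)).re = 0 := by simp
  rw [h, Real.exp_zero, one_mul]

private lemma aux_phase (a : ℝ) (ha : a ≠ 0) (τ : ℝ) (c : ℂ) (hc : ‖c‖ = 1) :
    ∃ t : ℝ, τ ≤ t ∧ Complex.exp (Complex.I * (t:ℂ) * (a:ℂ)) = c := by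
  have hπ := Real.pi_pos
  have h0 : Complex.exp ((c.arg : ℂ) * Complex.I) = c := by
    have h := Complex.norm_mul_exp_arg_mul_I c
    rw [hc] at h
    simpa using h
  have key : ∀ n : ℤ,
      Complex.exp (Complex.I * (((c.arg + 2*Real.pi*n)/a : ℝ):ℂ) * (a:ℂ)) = c := by
    intro n
    have harg : Complex.I * (((c.arg + 2*Real.pi*n)/a : ℝ):ℂ) * (a:ℂ)
        = (c.arg : ℂ) * Complex.I + (n:ℂ) * (2*(Real.pi:ℂ)*Complex.I) := by
      have haC : (a:ℂ) ≠ 0 := Complex.ofReal_ne_zero.2 ha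
      field_simp
      push_cast
      ring_nf
      simp [haC]
    rw [harg, Complex.exp_add, h0, Complex.exp_int_mul_two_pi_mul_I, mul_one]
  rcases lt_or_gt_of_ne ha with hneg | hpos
  · obtain ⟨n, hn⟩ := exists_int_le ((τ*a - c.arg)/(2*Real.pi))
    refine ⟨(c.arg + 2*Real.pi*n)/a, ?_, key n⟩
    rw [le_div_iff_of_neg hneg]
    rw [le_div_iff₀ (by positivity)] at hn
    linarith
  · obtain ⟨n, hn⟩ := exists_int_ge ((τ*a - c.arg)/(2*Real.pi))
    refine ⟨(c.arg + 2*Real.pi*n)/a, ?_, key n⟩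
    rw [le_div_iff₀ hpos]
    rw [div_le_iff₀ (by positivity)] at hn
    linarith

private lemma aux_hull_mem {κ : ℕ} (γ : Fin κ → ℝ) (τ₀ : ℝ) (s : ℕ → ℝ) (hs : ∀ k, 0 ≤ s k)
    (F : Finset ℕ) :
    ∀ t : ℝ, τ₀ ≤ t →
      (fun j : Fin κ => Complex.exp (Complex.I * (t:ℂ) * (γ j : ℂ)) *
        ∏ k ∈ F, (1 + Complex.exp (Complex.I * ((s k : ℝ):ℂ) * (γ j : ℂ))) / 2) ∈
      convexHull ℝ ((fun t : ℝ => fun j : Fin κ => Complex.exp (Complex.I * t * (γ j : ℂ))) ''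
        Set.Ici τ₀) := by
  classical
  induction F using Finset.induction_on with
  | empty =>
      intro t ht
      have h : (fun j : Fin κ => Complex.exp (Complex.I * (t:ℂ) * (γ j : ℂ)) *
          ∏ k ∈ (∅ : Finset ℕ), (1 + Complex.exp (Complex.I * ((s k : ℝ):ℂ) * (γ j : ℂ))) / 2)
          = (fun j : Fin κ => Complex.exp (Complex.I * (t:ℂ) * (γ j : ℂ))) := by
        funext j; simp
      rw [h]
      exact subset_convexHull ℝ _ (Set.mem_image_of_mem _ ht)
  | @insert a F ha ih =>
      intro t ht
      have key : (fun j : Fin κ => Complex.exp (Complex.I * (t:ℂ) * (γ j : ℂ)) *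
          ∏ k ∈ insert a F, (1 + Complex.exp (Complex.I * ((s k : ℝ):ℂ) * (γ j : ℂ))) / 2)
          = (1/2 : ℝ) • (fun j : Fin κ => Complex.exp (Complex.I * (t:ℂ) * (γ j : ℂ)) *
              ∏ k ∈ F, (1 + Complex.exp (Complex.I * ((s k : ℝ):ℂ) * (γ j : ℂ))) / 2)
            + (1/2 : ℝ) • (fun j : Fin κ =>
                Complex.exp (Complex.I * ((t + s a : ℝ):ℂ) * (γ j : ℂ)) *
              ∏ k ∈ F, (1 + Complex.exp (Complex.I * ((s k : ℝ):ℂ) * (γ j : ℂ))) / 2) := by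
        funext j
        simp only [Pi.add_apply, Pi.smul_apply, Complex.real_smul, Complex.ofReal_div,
          Complex.ofReal_one, Complex.ofReal_ofNat]
        rw [Finset.prod_insert ha]
        have hexp : Complex.exp (Complex.I * ((t + s a : ℝ):ℂ) * (γ j : ℂ))
            = Complex.exp (Complex.I * (t:ℂ) * (γ j : ℂ)) *
              Complex.exp (Complex.I * ((s a : ℝ):ℂ) * (γ j : ℂ)) := by
          rw [← Complex.exp_add]; congr 1; push_cast; ring
        rw [hexp]
        ring
      rw [key]
      exact (convex_convexHull ℝ _) (ih t ht) (ih (t + s a) (by linarith [hs a]))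
        (by norm_num) (by norm_num) (by norm_num)

open Real in
private lemma aux_choice (γ₁ : ℝ) (hγ₁ : γ₁ ≠ 0) (ε : ℝ) (hε : 0 < ε) (R : Finset ℝ)
    (hR : ∀ r ∈ R, (¬ ∃ z : ℤ, r = (z:ℝ)) ∨ (∃ z : ℤ, r = (z:ℝ) ∧ 2 ≤ z.natAbs)) :
    ∀ K₀ : ℕ, ∃ K : ℕ, K₀ ≤ K ∧ 1 ≤ K ∧ ∃ β : ℕ → ℝ,
      (∀ k ∈ Finset.Icc 2 K, (∃ n : ℤ, β k = π/(2*k) + π*n) ∧ 0 ≤ β k * γ₁) ∧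
      (∀ r ∈ R, ∏ k ∈ Finset.Icc 2 K, |Real.cos (r * β k)| ≤ ε) := by
  classical
  have hπ := Real.pi_pos
  set dβ : ℕ → ℝ := fun k => if 0 ≤ γ₁ then π/(2*k) else π/(2*k) - π with hdβ
  have hdβ_spec : ∀ k : ℕ, 2 ≤ k → (∃ n : ℤ, dβ k = π/(2*k) + π*n) ∧ 0 ≤ dβ k * γ₁ := by
    intro k hk
    have hkpos : (0:ℝ) < (k:ℝ) := by positivity
    have h1 : 0 < π/(2*(k:ℝ)) := by positivity
    have hk4 : (4:ℝ) ≤ 2*(k:ℝ) := by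
      have : (2:ℝ) ≤ (k:ℝ) := by exact_mod_cast hk
      linarith
    have h2 : π/(2*(k:ℝ)) ≤ π/4 :=
      div_le_div_of_nonneg_left hπ.le (by norm_num) hk4
    rw [hdβ]
    dsimp only
    split_ifs with hsgn
    · refine ⟨⟨0, by push_cast; ring⟩, ?_⟩
      exact mul_nonneg h1.le hsgn
    · refine ⟨⟨-1, by push_cast; ring⟩, ?_⟩
      push_neg at hsgn
      have hneg : π/(2*(k:ℝ)) - π < 0 := by linarith
      nlinarith
  revert hR
  induction R using Finset.induction_on with
  | empty =>
      intro _ K₀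
      refine ⟨max K₀ 1, le_max_left _ _, le_max_right _ _, dβ, ?_, by simp⟩
      intro k hk
      rw [Finset.mem_Icc] at hk
      exact hdβ_spec k hk.1
  | @insert r R hrR ih =>
      intro hR K₀
      have hR' : ∀ r' ∈ R, (¬ ∃ z : ℤ, r' = (z:ℝ)) ∨ (∃ z : ℤ, r' = (z:ℝ) ∧ 2 ≤ z.natAbs) :=
        fun r' hr' => hR r' (Finset.mem_insert_of_mem hr')
      obtain ⟨K₁, hK₁K₀, hK₁1, β₁, ha₁, hb₁⟩ := ih hR' K₀
      have hsplit : ∀ (K : ℕ), K₁ ≤ K → ∀ g : ℕ → ℝ,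
          ∏ k ∈ Finset.Icc 2 K, g k
            = (∏ k ∈ Finset.Icc 2 K₁, g k) * ∏ k ∈ Finset.Ioc K₁ K, g k := by
        intro K hK g
        have h2 : Finset.Icc 2 K = Finset.Ioc 1 K := by rw [← Finset.Icc_add_one_left_eq_Ioc]; rfl
        have h3 : Finset.Icc 2 K₁ = Finset.Ioc 1 K₁ := by rw [← Finset.Icc_add_one_left_eq_Ioc]; rfl
        rw [h2, h3, Finset.prod_Ioc_consecutive _ hK₁1 hK]
      have hold : ∀ (K : ℕ), K₁ ≤ K → ∀ (β : ℕ → ℝ), (∀ k, k ≤ K₁ → β k = β₁ k) →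
          ∀ r' ∈ R, ∏ k ∈ Finset.Icc 2 K, |Real.cos (r' * β k)| ≤ ε := by
        intro K hK β hβeq r' hr'
        rw [hsplit K hK]
        have hA : ∏ k ∈ Finset.Icc 2 K₁, |Real.cos (r' * β k)| ≤ ε := by
          have heq : ∏ k ∈ Finset.Icc 2 K₁, |Real.cos (r' * β k)|
              = ∏ k ∈ Finset.Icc 2 K₁, |Real.cos (r' * β₁ k)| :=
            Finset.prod_congr rfl (fun k hk => by
              rw [Finset.mem_Icc] at hk; rw [hβeq k hk.2])
          rw [heq]; exact hb₁ r' hr'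
        have hB : ∏ k ∈ Finset.Ioc K₁ K, |Real.cos (r' * β k)| ≤ 1 :=
          Finset.prod_le_one (fun i _ => abs_nonneg _) (fun i _ => Real.abs_cos_le_one _)
        calc (∏ k ∈ Finset.Icc 2 K₁, |Real.cos (r' * β k)|) *
              ∏ k ∈ Finset.Ioc K₁ K, |Real.cos (r' * β k)|
            ≤ ε * 1 := mul_le_mul hA hB (Finset.prod_nonneg fun i _ => abs_nonneg _) hε.le
          _ = ε := mul_one ε
      rcases hR r (Finset.mem_insert_self r R) with hni | ⟨z, rfl, hz⟩
      · -- non-integer ratio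
        have hni' : ∀ z : ℤ, r ≠ (z:ℝ) := by push_neg at hni; exact hni
        obtain ⟨L, hL⟩ := exists_pow_lt_of_lt_one hε (by norm_num : (4:ℝ)/5 < 1)
        set β : ℕ → ℝ := fun k =>
          if k ≤ K₁ then β₁ k else Classical.choose (aux_step γ₁ r hγ₁ hni' (π/(2*k))) with hβ
        have hβeq : ∀ k, k ≤ K₁ → β k = β₁ k := by
          intro k hk; rw [hβ]; simp only [if_pos hk]
        refine ⟨K₁ + L, by omega, by omega, β, ?_, ?_⟩
        · intro k hk
          rw [Finset.mem_Icc] at hk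
          by_cases hkK : k ≤ K₁
          · rw [hβeq k hkK]
            exact ha₁ k (Finset.mem_Icc.2 ⟨hk.1, hkK⟩)
          · have spec := Classical.choose_spec (aux_step γ₁ r hγ₁ hni' (π/(2*k)))
            rw [hβ]; simp only [if_neg hkK]
            exact ⟨spec.1, spec.2.1⟩
        · intro r' hr'
          rcases Finset.mem_insert.1 hr' with rfl | hr'R
          · rw [hsplit (K₁ + L) (by omega)]
            have hA : ∏ k ∈ Finset.Icc 2 K₁, |Real.cos (r' * β k)| ≤ 1 :=
              Finset.prod_le_one (fun i _ => abs_nonneg _) (fun i _ => Real.abs_cos_le_one _)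
            have hB : ∏ k ∈ Finset.Ioc K₁ (K₁+L), |Real.cos (r' * β k)| ≤ (4/5)^L := by
              have hstep : ∀ k ∈ Finset.Ioc K₁ (K₁+L), |Real.cos (r' * β k)| ≤ 4/5 := by
                intro k hk
                rw [Finset.mem_Ioc] at hk
                have hkK : ¬ k ≤ K₁ := by omega
                have spec := Classical.choose_spec (aux_step γ₁ r' hγ₁ hni' (π/(2*k)))
                rw [hβ]; simp only [if_neg hkK]
                exact spec.2.2
              calc ∏ k ∈ Finset.Ioc K₁ (K₁+L), |Real.cos (r' * β k)|
                  ≤ ∏ _k ∈ Finset.Ioc K₁ (K₁+L), ((4:ℝ)/5) :=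
                    Finset.prod_le_prod (fun i _ => abs_nonneg _) hstep
                _ = (4/5)^(Finset.Ioc K₁ (K₁+L)).card := Finset.prod_const _
                _ = (4/5)^L := by rw [Nat.card_Ioc, Nat.add_sub_cancel_left]
            calc (∏ k ∈ Finset.Icc 2 K₁, |Real.cos (r' * β k)|) *
                  ∏ k ∈ Finset.Ioc K₁ (K₁+L), |Real.cos (r' * β k)|
                ≤ 1 * (4/5)^L := mul_le_mul hA hB
                    (Finset.prod_nonneg fun i _ => abs_nonneg _) zero_le_one
              _ = (4/5)^L := one_mul _
              _ ≤ ε := hL.le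
          · exact hold (K₁ + L) (by omega) β hβeq r' hr'R
      · -- integer ratio
        obtain ⟨k₀, hk₀2, hk₀⟩ := aux_int_kill z hz
        set β : ℕ → ℝ := fun k => if k ≤ K₁ then β₁ k else dβ k with hβ
        have hβeq : ∀ k, k ≤ K₁ → β k = β₁ k := by
          intro k hk; rw [hβ]; simp only [if_pos hk]
        have hacomb : ∀ k ∈ Finset.Icc 2 (max K₁ k₀),
            (∃ n : ℤ, β k = π/(2*k) + π*n) ∧ 0 ≤ β k * γ₁ := by
          intro k hk
          rw [Finset.mem_Icc] at hk
          by_cases hkK : k ≤ K₁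
          · rw [hβeq k hkK]
            exact ha₁ k (Finset.mem_Icc.2 ⟨hk.1, hkK⟩)
          · rw [hβ]; simp only [if_neg hkK]
            exact hdβ_spec k hk.1
        refine ⟨max K₁ k₀, le_trans hK₁K₀ (le_max_left _ _), le_trans hK₁1 (le_max_left _ _),
          β, hacomb, ?_⟩
        intro r' hr'
        rcases Finset.mem_insert.1 hr' with rfl | hr'R
        · have hmem : k₀ ∈ Finset.Icc 2 (max K₁ k₀) :=
            Finset.mem_Icc.2 ⟨hk₀2, le_max_right _ _⟩
          obtain ⟨⟨n, hn⟩, -⟩ := hacomb k₀ hmem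
          have hzero : |Real.cos ((z:ℝ) * β k₀)| = 0 := by
            rw [hn, hk₀ n, abs_zero]
          rw [Finset.prod_eq_zero hmem hzero]
          exact hε.le
        · exact hold (max K₁ k₀) (le_max_left _ _) β hβeq r' hr'R

/-- Convexification lemma (closure part): let `γ₁, …, γ_κ` be nonzero real numbers with
`|γ₁| ≠ |γ_j|` for `j ≥ 2`, let `φ(t) = (e^{itγ₁}, …, e^{itγ_κ}) ∈ ℂ^κ` and let
`ν = ∏_{k=2}^∞ cos(π/(2k))`.  Then for every `τ₀ ∈ ℝ` the closure of the convex hull of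
`φ([τ₀, ∞))` contains every point `(νξ, 0, …, 0)` with `ξ ∈ ℂ`, `|ξ| = 1`. -/
theorem convexification_closure
    (κ : ℕ) (hκ : 1 ≤ κ) (γ : Fin κ → ℝ)
    (hγ : ∀ j, γ j ≠ 0)
    (hγ1 : ∀ j : Fin κ, j ≠ ⟨0, hκ⟩ → |γ ⟨0, hκ⟩| ≠ |γ j|)
    (ν : ℝ)
    (hν : Tendsto (fun n : ℕ => ∏ k ∈ Finset.Icc 2 n, Real.cos (Real.pi / (2 * k)))
      atTop (nhds ν))
    (τ₀ : ℝ) :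
    {x : Fin κ → ℂ | ∃ ξ : ℂ, ‖ξ‖ = 1 ∧
        x = fun j => if j = ⟨0, hκ⟩ then (ν : ℂ) * ξ else 0} ⊆
      closure (convexHull ℝ
        ((fun t : ℝ => fun j : Fin κ => Complex.exp (Complex.I * t * (γ j : ℂ))) ''
          Set.Ici τ₀)) := by
  classical
  intro x hx
  obtain ⟨ξ, hξ, rfl⟩ := hx
  set i0 : Fin κ := ⟨0, hκ⟩ with hi0
  set γ₁ : ℝ := γ i0 with hγ₁def
  have hγ₁ : γ₁ ≠ 0 := hγ i0
  rw [Metric.mem_closure_iff]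
  intro ε hε
  have hε2 : 0 < ε/2 := by linarith
  obtain ⟨K₀, hK₀⟩ := (Metric.tendsto_atTop.1 hν) (ε/2) hε2
  set R : Finset ℝ := (Finset.univ.erase i0).image (fun j => γ j / γ₁) with hR_def
  have hRprop : ∀ r ∈ R, (¬ ∃ z : ℤ, r = (z:ℝ)) ∨ (∃ z : ℤ, r = (z:ℝ) ∧ 2 ≤ z.natAbs) := by
    intro r hr
    rw [hR_def, Finset.mem_image] at hr
    obtain ⟨j, hj, rfl⟩ := hr
    have hjne : j ≠ i0 := (Finset.mem_erase.1 hj).1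
    by_cases hcase : ∃ z : ℤ, γ j / γ₁ = (z:ℝ)
    · right
      obtain ⟨z, hzeq⟩ := hcase
      refine ⟨z, hzeq, ?_⟩
      have h0 : γ j / γ₁ ≠ 0 := div_ne_zero (hγ j) hγ₁
      have h1 : γ j / γ₁ ≠ 1 := by
        intro h
        rw [div_eq_one_iff_eq hγ₁] at h
        exact hγ1 j hjne (by rw [h])
      have hm1 : γ j / γ₁ ≠ -1 := by
        intro h
        have hj' : γ j = -γ₁ := by
          field_simp at h
          linarith
        exact hγ1 j hjne (by rw [hj', abs_neg])
      have hz0 : z ≠ 0 := by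
        rintro rfl
        exact h0 (by simpa using hzeq)
      have hz1 : z ≠ 1 := by
        rintro rfl
        exact h1 (by simpa using hzeq)
      have hzm1 : z ≠ -1 := by
        rintro rfl
        apply hm1
        rw [hzeq]; push_cast; ring
      omega
    · left; exact hcase
  obtain ⟨K, hKK₀, hK1, β, ha, hb⟩ := aux_choice γ₁ hγ₁ (ε/2) hε2 R hRprop K₀
  set s : ℕ → ℝ := fun k => if k ∈ Finset.Icc 2 K then 2 * β k / γ₁ else 0 with hs_def
  have hs : ∀ k, 0 ≤ s k := by
    intro k
    rw [hs_def]
    dsimp only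
    split_ifs with h
    · obtain ⟨-, hsign⟩ := ha k h
      have hrw : 2 * β k / γ₁ = 2 * (β k * γ₁) / (γ₁ * γ₁) := by
        field_simp
      rw [hrw]
      exact div_nonneg (by linarith) (mul_self_nonneg γ₁)
    · exact le_refl 0
  have hsγ : ∀ k ∈ Finset.Icc 2 K, s k * γ₁ / 2 = β k := by
    intro k hk
    rw [hs_def]
    dsimp only
    rw [if_pos hk]
    field_simp
  have habs : ∀ (j : Fin κ) (k : ℕ),
      ‖(1 + Complex.exp (Complex.I * ((s k : ℝ):ℂ) * ((γ j : ℝ):ℂ)))/2‖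
        = |Real.cos (s k * γ j / 2)| := by
    intro j k
    have hfa : Complex.I * ((s k : ℝ):ℂ) * ((γ j : ℝ):ℂ)
        = Complex.I * ((s k * γ j : ℝ) : ℂ) := by push_cast; ring
    rw [hfa, aux_factor_abs]
  set W : ℂ := ∏ k ∈ Finset.Icc 2 K,
    (1 + Complex.exp (Complex.I * ((s k : ℝ):ℂ) * ((γ₁ : ℝ):ℂ)))/2 with hW_def
  set P : ℝ := ∏ k ∈ Finset.Icc 2 K, Real.cos (Real.pi/(2*(k:ℝ))) with hP_def
  have hcosk : ∀ k ∈ Finset.Icc 2 K, 0 < Real.cos (Real.pi/(2*(k:ℝ))) := by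
    intro k hk
    rw [Finset.mem_Icc] at hk
    have hk2 : (2:ℝ) ≤ (k:ℝ) := by exact_mod_cast hk.1
    have hπ := Real.pi_pos
    apply Real.cos_pos_of_mem_Ioo
    constructor
    · have : 0 < Real.pi/(2*(k:ℝ)) := by positivity
      linarith
    · calc Real.pi/(2*(k:ℝ)) ≤ Real.pi/4 :=
            div_le_div_of_nonneg_left hπ.le (by norm_num) (by linarith)
        _ < Real.pi/2 := by linarith
  have hPpos : 0 < P := Finset.prod_pos hcosk
  have habs1 : ∀ k ∈ Finset.Icc 2 K,
      ‖(1 + Complex.exp (Complex.I * ((s k : ℝ):ℂ) * ((γ₁ : ℝ):ℂ)))/2‖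
        = Real.cos (Real.pi/(2*(k:ℝ))) := by
    intro k hk
    rw [habs i0 k]
    obtain ⟨⟨n, hn⟩, -⟩ := ha k hk
    rw [hsγ k hk, hn]
    have hre : Real.pi/(2*(k:ℝ)) + Real.pi*n = Real.pi/(2*(k:ℝ)) + (n:ℤ)*Real.pi := by
      push_cast; ring
    rw [hre, aux_abs_cos_add_int_mul_pi]
    exact abs_of_pos (hcosk k hk)
  have hWabs : ‖W‖ = P := by
    rw [hW_def, norm_prod, hP_def]
    exact Finset.prod_congr rfl habs1
  have hWne : W ≠ 0 := by
    intro h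
    rw [h, norm_zero] at hWabs
    exact hPpos.ne hWabs
  set c : ℂ := ξ * ((P:ℝ) : ℂ) / W with hc_def
  have hcnorm : ‖c‖ = 1 := by
    rw [hc_def, norm_div, norm_mul, hξ, Complex.norm_real, Real.norm_eq_abs,
      abs_of_pos hPpos, one_mul, hWabs]
    exact div_self hPpos.ne'
  obtain ⟨t, hτt, hexp⟩ := aux_phase γ₁ hγ₁ τ₀ c hcnorm
  refine ⟨(fun j => Complex.exp (Complex.I * (t:ℂ) * (γ j : ℂ)) *
      ∏ k ∈ Finset.Icc 2 K, (1 + Complex.exp (Complex.I * ((s k : ℝ):ℂ) * (γ j : ℂ)))/2),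
    aux_hull_mem γ τ₀ s hs (Finset.Icc 2 K) t hτt, ?_⟩
  rw [dist_eq_norm]
  have hbound : ‖(fun j => if j = i0 then (ν:ℂ)*ξ else 0) -
      (fun j => Complex.exp (Complex.I * (t:ℂ) * (γ j : ℂ)) *
      ∏ k ∈ Finset.Icc 2 K, (1 + Complex.exp (Complex.I * ((s k : ℝ):ℂ) * (γ j : ℂ)))/2)‖
      ≤ ε/2 := by
    apply (pi_norm_le_iff_of_nonneg hε2.le).2
    intro j
    by_cases hj : j = i0
    · simp only [Pi.sub_apply, if_pos hj]
      rw [hj]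
      show ‖(ν:ℂ)*ξ - Complex.exp (Complex.I * (t:ℂ) * ((γ₁ : ℝ):ℂ)) * W‖ ≤ ε/2
      have hpj : Complex.exp (Complex.I * (t:ℂ) * ((γ₁ : ℝ):ℂ)) * W = ξ * ((P:ℝ):ℂ) := by
        rw [hexp, hc_def, div_mul_cancel₀ _ hWne]
      rw [hpj]
      have hdiff : (ν:ℂ)*ξ - ξ*((P:ℝ):ℂ) = ξ * (((ν - P : ℝ)):ℂ) := by
        push_cast; ring
      rw [hdiff, norm_mul, hξ, one_mul, Complex.norm_real, Real.norm_eq_abs]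
      have hdist := hK₀ K hKK₀
      rw [← hP_def] at hdist
      rw [Real.dist_eq] at hdist
      rw [abs_sub_comm] at hdist
      exact hdist.le
    · simp only [Pi.sub_apply, if_neg hj, zero_sub, norm_neg]
      rw [norm_mul]
      have h1 : ‖Complex.exp (Complex.I * (t:ℂ) * (γ j : ℂ))‖ = 1 := by
        rw [Complex.norm_exp]
        have hre : (Complex.I * (t:ℂ) * ((γ j : ℝ):ℂ)).re = 0 := by simp
        rw [hre, Real.exp_zero]
      rw [h1, one_mul, norm_prod]
      have heach : ∀ k ∈ Finset.Icc 2 K,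
          ‖(1 + Complex.exp (Complex.I * ((s k : ℝ):ℂ) * (γ j : ℂ)))/2‖
            = |Real.cos ((γ j / γ₁) * β k)| := by
        intro k hk
        rw [habs j k]
        have harg : s k * γ j / 2 = (γ j / γ₁) * β k := by
          rw [hs_def]
          dsimp only
          rw [if_pos hk]
          field_simp
        rw [harg]
      rw [Finset.prod_congr rfl heach]
      exact hb (γ j / γ₁) (by
        rw [hR_def]
        exact Finset.mem_image_of_mem _ (Finset.mem_erase.2 ⟨hj, Finset.mem_univ j⟩))
  calc ‖_ - _‖ ≤ ε/2 := hbound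
    _ < ε := by linarith
end

section
/- The real Lie algebra L generated by A, B₁, B₂, B₃ contains the elementary matrices E_{(ℓ,k),(ℓ+1,k+j)} for every k = −ℓ, …, ℓ and every j ∈ {−1, 0, 1}. -/
open Matrix

attribute [local instance] LieRing.ofAssociativeRing

/-- The index set `J_ℓ = {(j,k) : j ∈ {ℓ, ℓ+1}, -j ≤ k ≤ j}`. -/
noncomputable def Jset (l : ℕ) : Finset (ℤ × ℤ) :=
  (({(l : ℤ), (l : ℤ) + 1} : Finset ℤ) ×ˢ Finset.Icc (-((l : ℤ) + 1)) ((l : ℤ) + 1)).filter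
    fun x => -x.1 ≤ x.2 ∧ x.2 ≤ x.1

/-- The space of complex matrices indexed by `J_ℓ`. -/
abbrev Mat (l : ℕ) := Matrix (Jset l) (Jset l) ℂ

/-- `e_{a,b}`: matrix with a single entry `1` at position `(a,b)`. -/
def eM (l : ℕ) (a b : ℤ × ℤ) : Mat l :=
  fun x y => if (x : ℤ × ℤ) = a ∧ (y : ℤ × ℤ) = b then 1 else 0

/-- `E_{a,b} = e_{a,b} - e_{b,a}`. -/
def Em (l : ℕ) (a b : ℤ × ℤ) : Mat l := eM l a b - eM l b a

/-- `F_{a,b} = i e_{a,b} + i e_{b,a}`. -/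
def Fm (l : ℕ) (a b : ℤ × ℤ) : Mat l := Complex.I • eM l a b + Complex.I • eM l b a

/-- `D_{a,b} = i e_{a,a} - i e_{b,b}`. -/
def Dm (l : ℕ) (a b : ℤ × ℤ) : Mat l := Complex.I • eM l a a - Complex.I • eM l b b

/-- `p_{ℓ,m} = -√(((ℓ+1)² - m²)/((2ℓ+1)(2ℓ+3)))`. -/
noncomputable def pc (l : ℕ) (m : ℤ) : ℝ :=
  -Real.sqrt ((((l : ℝ) + 1) ^ 2 - (m : ℝ) ^ 2) / ((2 * (l : ℝ) + 1) * (2 * (l : ℝ) + 3)))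

/-- `q_{ℓ,m} = √(((ℓ-m+2)(ℓ-m+1))/(4(2ℓ+1)(2ℓ+3)))`. -/
noncomputable def qc (l : ℕ) (m : ℤ) : ℝ :=
  Real.sqrt (((l : ℝ) - (m : ℝ) + 2) * ((l : ℝ) - (m : ℝ) + 1) /
    (4 * (2 * (l : ℝ) + 1) * (2 * (l : ℝ) + 3)))

/-- The control potential `B₁`. -/
noncomputable def B1 (l : ℕ) : Mat l :=
  ∑ m ∈ Finset.Icc (-(l : ℤ)) (l : ℤ),
    ((-qc l m) • Fm l ((l : ℤ), m) ((l : ℤ) + 1, m - 1)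
      + qc l (-m) • Fm l ((l : ℤ), m) ((l : ℤ) + 1, m + 1))

/-- The control potential `B₂`. -/
noncomputable def B2 (l : ℕ) : Mat l :=
  ∑ m ∈ Finset.Icc (-(l : ℤ)) (l : ℤ),
    (qc l m • Em l ((l : ℤ), m) ((l : ℤ) + 1, m - 1)
      + qc l (-m) • Em l ((l : ℤ), m) ((l : ℤ) + 1, m + 1))

/-- The control potential `B₃`. -/
noncomputable def B3 (l : ℕ) : Mat l :=
  ∑ m ∈ Finset.Icc (-(l : ℤ)) (l : ℤ), pc l m • Fm l ((l : ℤ), m) ((l : ℤ) + 1, m)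

/-- The (traceless) drift matrix `A`. -/
noncomputable def Am (l : ℕ) : Mat l :=
  (∑ k ∈ Finset.Icc (-(l : ℤ)) (l : ℤ),
      (Complex.I * (2 * (l : ℂ) + 3) / 2) • eM l ((l : ℤ), k) ((l : ℤ), k))
    + ∑ k ∈ Finset.Icc (-((l : ℤ) + 1)) ((l : ℤ) + 1),
      (-(Complex.I * (2 * (l : ℂ) + 1) / 2)) • eM l ((l : ℤ) + 1, k) ((l : ℤ) + 1, k)


namespace Aux
open Finset

variable (l : ℕ)

def pa (m : ℤ) : ℤ × ℤ := ((l : ℤ), m)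
def pb (m : ℤ) : ℤ × ℤ := ((l : ℤ) + 1, m)

@[simp] lemma pa_eq_pa {m n : ℤ} : pa l m = pa l n ↔ m = n := by simp [pa]
@[simp] lemma pb_eq_pb {m n : ℤ} : pb l m = pb l n ↔ m = n := by simp [pb]
@[simp] lemma pa_ne_pb (m n : ℤ) : pa l m ≠ pb l n := by simp [pa, pb, Prod.ext_iff]
@[simp] lemma pb_ne_pa (m n : ℤ) : pb l m ≠ pa l n := by simp [pa, pb, Prod.ext_iff]

lemma pa_mem {m : ℤ} (h1 : -(l : ℤ) ≤ m) (h2 : m ≤ l) : pa l m ∈ Jset l := by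
  simp [pa, Jset]; omega

lemma pb_mem {m : ℤ} (h1 : -(l : ℤ) - 1 ≤ m) (h2 : m ≤ (l : ℤ) + 1) : pb l m ∈ Jset l := by
  simp [pb, Jset]; omega

lemma mem_Jset_cases {c : ℤ × ℤ} (h : c ∈ Jset l) :
    (c.1 = (l : ℤ) ∧ -(l:ℤ) ≤ c.2 ∧ c.2 ≤ l) ∨
    (c.1 = (l : ℤ) + 1 ∧ -(l:ℤ) - 1 ≤ c.2 ∧ c.2 ≤ (l:ℤ) + 1) := by
  simp [Jset] at h
  omega

lemma eM_apply' (a b : ℤ × ℤ) (x y : Jset l) :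
    eM l a b x y = (if (x : ℤ × ℤ) = a then (1:ℂ) else 0) * (if (y : ℤ × ℤ) = b then 1 else 0) := by
  by_cases h1 : (x : ℤ × ℤ) = a <;> by_cases h2 : (y : ℤ × ℤ) = b <;> simp [eM, h1, h2]

lemma eM_zero_left {a : ℤ × ℤ} (h : a ∉ Jset l) (b : ℤ × ℤ) : eM l a b = 0 := by
  ext x y
  simp only [eM, Matrix.zero_apply, ite_eq_right_iff]
  rintro ⟨rfl, -⟩
  exact absurd x.2 h

lemma eM_zero_right (a : ℤ × ℤ) {b : ℤ × ℤ} (h : b ∉ Jset l) : eM l a b = 0 := by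
  ext x y
  simp only [eM, Matrix.zero_apply, ite_eq_right_iff]
  rintro ⟨-, rfl⟩
  exact absurd y.2 h

lemma sum_ind (b c : ℤ × ℤ) :
    (∑ z : Jset l, (if (z : ℤ × ℤ) = b then (1:ℂ) else 0) * (if (z : ℤ × ℤ) = c then 1 else 0))
      = if b = c ∧ b ∈ Jset l then 1 else 0 := by
  by_cases hb : b ∈ Jset l
  · rw [Finset.sum_eq_single (⟨b, hb⟩ : Jset l)]
    · by_cases hbc : b = c
      · subst hbc; simp [hb]
      · simp [hbc]
    · intro z _ hz
      have : (z : ℤ × ℤ) ≠ b := fun h => hz (Subtype.ext h)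
      simp [this]
    · simp
  · rw [Finset.sum_eq_zero, if_neg (by tauto)]
    intro z _
    have : (z : ℤ × ℤ) ≠ b := fun h => hb (h ▸ z.2)
    simp [this]

lemma eM_mul (a b c d : ℤ × ℤ) :
    eM l a b * eM l c d = if b = c ∧ b ∈ Jset l then eM l a d else 0 := by
  ext x y
  rw [Matrix.mul_apply]
  calc (∑ z : Jset l, eM l a b x z * eM l c d z y)
      = ((if (x : ℤ × ℤ) = a then (1:ℂ) else 0) * (if (y : ℤ × ℤ) = d then 1 else 0)) *
          ∑ z : Jset l, (if (z : ℤ × ℤ) = b then (1:ℂ) else 0) * (if (z : ℤ × ℤ) = c then 1 else 0) := by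
        rw [Finset.mul_sum]
        exact Finset.sum_congr rfl fun z _ => by rw [eM_apply', eM_apply']; ring
    _ = _ := by
        rw [sum_ind]
        by_cases h : b = c ∧ b ∈ Jset l
        · obtain ⟨rfl, hb⟩ := h
          simp [hb, eM_apply']
          try ring
        · simp [h]

lemma lie_eM (a b c d : ℤ × ℤ) :
    ⁅eM l a b, eM l c d⁆ = (if b = c ∧ b ∈ Jset l then eM l a d else 0)
      - (if d = a ∧ d ∈ Jset l then eM l c b else 0) := by
  rw [Ring.lie_def, eM_mul, eM_mul]

end Aux
namespace Aux
open Finset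
variable (l : ℕ)

lemma rsmul (r : ℝ) (M : Mat l) : r • M = (r : ℂ) • M := by
  rw [← algebraMap_smul ℂ r M]
  norm_num

lemma lie_Em_Fm_zero {a b c d : ℤ × ℤ} (h1 : a ≠ c) (h2 : a ≠ d) (h3 : b ≠ c) (h4 : b ≠ d) :
    ⁅Em l a b, Fm l c d⁆ = 0 := by
  simp [Em, Fm, sub_lie, lie_add, lie_smul, lie_eM, h1, h2, h3, h4,
    Ne.symm h1, Ne.symm h2, Ne.symm h3, Ne.symm h4]

lemma lie_Fm_Em_zero {a b c d : ℤ × ℤ} (h1 : a ≠ c) (h2 : a ≠ d) (h3 : b ≠ c) (h4 : b ≠ d) :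
    ⁅Fm l a b, Em l c d⁆ = 0 := by
  rw [← lie_skew, lie_Em_Fm_zero l (Ne.symm h1) (Ne.symm h3) (Ne.symm h2) (Ne.symm h4), neg_zero]

lemma lie_Em_Fm_same {a b : ℤ × ℤ} (ha : a ∈ Jset l) (hb : b ∈ Jset l) (hab : a ≠ b) :
    ⁅Em l a b, Fm l a b⁆ = (2 : ℝ) • Dm l a b := by
  rw [rsmul]
  simp only [Em, Fm, Dm, sub_lie, lie_add, lie_smul, lie_eM, ha, hb, hab, Ne.symm hab,
    and_true, if_true, if_neg (fun h : b = a => hab h.symm), if_neg hab,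
    if_neg (show ¬(b = a ∧ b ∈ Jset l) by tauto), if_neg (show ¬(a = b ∧ a ∈ Jset l) by tauto)]
  module

end Aux
namespace Aux
open Finset
variable (l : ℕ)

noncomputable def diagM (g : ℤ × ℤ → ℝ) : Mat l :=
  Matrix.diagonal (fun x : Jset l => ((g (x : ℤ × ℤ) : ℂ) * Complex.I))

lemma diagM_lie_eM (g : ℤ × ℤ → ℝ) (c d : ℤ × ℤ) :
    ⁅diagM l g, eM l c d⁆ = (((g c - g d : ℝ) : ℂ) * Complex.I) • eM l c d := by
  rw [Ring.lie_def]
  ext x y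
  simp only [Matrix.sub_apply, Matrix.smul_apply, diagM, Matrix.diagonal_mul, Matrix.mul_diagonal,
    eM]
  by_cases h1 : (x : ℤ × ℤ) = c <;> by_cases h2 : (y : ℤ × ℤ) = d <;>
    simp [h1, h2, smul_eq_mul] <;> push_cast <;> ring

lemma diagM_lie_Em (g : ℤ × ℤ → ℝ) (c d : ℤ × ℤ) :
    ⁅diagM l g, Em l c d⁆ = (g c - g d) • Fm l c d := by
  rw [rsmul]
  simp only [Em, Fm, lie_sub, diagM_lie_eM]
  module

lemma diagM_lie_Fm (g : ℤ × ℤ → ℝ) (c d : ℤ × ℤ) :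
    ⁅diagM l g, Fm l c d⁆ = (-(g c - g d)) • Em l c d := by
  rw [rsmul]
  simp only [Em, Fm, lie_add, lie_smul, diagM_lie_eM]
  push_cast
  rw [smul_smul, smul_smul,
    show Complex.I * ((((g c : ℂ)) - g d) * Complex.I) = -(((g c : ℂ)) - g d) by
      rw [mul_comm _ Complex.I, ← mul_assoc, Complex.I_mul_I]; ring,
    show Complex.I * ((((g d : ℂ)) - g c) * Complex.I) = (((g c : ℂ)) - g d) by
      rw [mul_comm _ Complex.I, ← mul_assoc, Complex.I_mul_I]; ring]
  module

lemma diagM_ad2_Em (g : ℤ × ℤ → ℝ) (c d : ℤ × ℤ) :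
    ⁅diagM l g, ⁅diagM l g, Em l c d⁆⁆ = (-(g c - g d) ^ 2) • Em l c d := by
  rw [diagM_lie_Em, lie_smul, diagM_lie_Fm, smul_smul]
  congr 1
  ring

lemma diagM_ad2_Fm (g : ℤ × ℤ → ℝ) (c d : ℤ × ℤ) :
    ⁅diagM l g, ⁅diagM l g, Fm l c d⁆⁆ = (-(g c - g d) ^ 2) • Fm l c d := by
  rw [diagM_lie_Fm, lie_smul, diagM_lie_Em, smul_smul]
  congr 1
  ring

end Aux
namespace Aux
open Finset
variable (l : ℕ)

lemma lie_sum' {ι : Type*} (s : Finset ι) (f : ι → Mat l) (x : Mat l) :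
    ⁅x, ∑ i ∈ s, f i⁆ = ∑ i ∈ s, ⁅x, f i⁆ := by
  induction s using Finset.cons_induction with
  | empty => simp
  | cons a s ha ih => simp [Finset.sum_cons, lie_add, ih]

lemma sum_lie' {ι : Type*} (s : Finset ι) (f : ι → Mat l) (x : Mat l) :
    ⁅∑ i ∈ s, f i, x⁆ = ∑ i ∈ s, ⁅f i, x⁆ := by
  induction s using Finset.cons_induction with
  | empty => simp
  | cons a s ha ih => simp [Finset.sum_cons, add_lie, ih]

lemma lie_sum_sum_diag {ι : Type*} [DecidableEq ι] (s : Finset ι) (f g : ι → Mat l)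
    (hcross : ∀ m ∈ s, ∀ n ∈ s, m ≠ n → ⁅f m, g n⁆ = 0) :
    ⁅∑ m ∈ s, f m, ∑ n ∈ s, g n⁆ = ∑ m ∈ s, ⁅f m, g m⁆ := by
  rw [sum_lie']
  refine Finset.sum_congr rfl fun m hm => ?_
  rw [lie_sum', Finset.sum_eq_single m]
  · intro n hn hnm
    exact hcross m hm n hn (Ne.symm hnm)
  · intro h
    exact absurd hm h

lemma sum_neg_reindex {β : Type*} [AddCommMonoid β] (a b : ℤ) (f : ℤ → β) :
    ∑ m ∈ Icc a b, f m = ∑ m ∈ Icc (-b) (-a), f (-m) := by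
  apply Finset.sum_nbij' (fun m => -m) (fun m => -m) <;>
    simp +contextual [Finset.mem_Icc] <;> omega

lemma sum_shift_reindex {β : Type*} [AddCommMonoid β] (a b c : ℤ) (f : ℤ → β) :
    ∑ m ∈ Icc a b, f m = ∑ m ∈ Icc (a + c) (b + c), f (m - c) := by
  apply Finset.sum_nbij' (fun m => m + c) (fun m => m - c) <;>
    simp +contextual [Finset.mem_Icc] <;> omega

lemma icc_split_at {β : Type*} [AddCommMonoid β] (a b c : ℤ) (hab : a ≤ b + 1) (hbc : b ≤ c)
    (f : ℤ → β) :
    ∑ m ∈ Icc a c, f m = (∑ m ∈ Icc a b, f m) + ∑ m ∈ Icc (b+1) c, f m := by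
  rw [← Finset.sum_union]
  · congr 1
    ext m
    simp only [Finset.mem_Icc, Finset.mem_union]
    omega
  · rw [Finset.disjoint_left]
    intro m h1 h2
    simp only [Finset.mem_Icc] at h1 h2
    omega

lemma icc_insert_zero {β : Type*} [AddCommMonoid β] (f : ℤ → β) :
    ∑ m ∈ Icc (0:ℤ) l, f m = f 0 + ∑ m ∈ Icc (1:ℤ) l, f m := by
  rw [show Icc (0:ℤ) l = insert 0 (Icc (1:ℤ) l) by ext m; simp [Finset.mem_Icc]; omega,
    Finset.sum_insert (by simp)]

lemma icc_drop_top {β : Type*} [AddCommMonoid β] (f : ℤ → β) (hf : f (l:ℤ) = 0) :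
    ∑ m ∈ Icc (0:ℤ) l, f m = ∑ m ∈ Icc (0:ℤ) ((l:ℤ)-1), f m := by
  rw [show Icc (0:ℤ) (l:ℤ) = insert (l:ℤ) (Icc (0:ℤ) ((l:ℤ)-1)) by
        ext m; simp [Finset.mem_Icc]; omega,
    Finset.sum_insert (by simp [Finset.mem_Icc]), hf, zero_add]

/-- regroup for B3-type sums -/
lemma regroup2 {β : Type*} [AddCommMonoid β] (h : ℤ → β) :
    ∑ m ∈ Icc (-(l:ℤ)) l, h m = h 0 + ∑ r ∈ Icc (1:ℤ) l, (h r + h (-r)) := by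
  rw [icc_split_at (-(l:ℤ)) (-1) l (by omega) (by omega),
    show Icc ((-1:ℤ)+1) (l:ℤ) = Icc 0 (l:ℤ) by norm_num, icc_insert_zero,
    sum_neg_reindex (-(l:ℤ)) (-1), Finset.sum_add_distrib]
  simp only [neg_neg]
  abel

/-- regroup for B1/B2-type sums -/
lemma regroup {β : Type*} [AddCommMonoid β] (g : ℤ → ℤ → β)
    (hg : g ((l:ℤ)+1) l = 0) (hg' : g (-(l:ℤ)-1) (-(l:ℤ)) = 0) :
    ∑ m ∈ Icc (-(l:ℤ)) l, (g m (m-1) + g m (m+1))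
      = ∑ r ∈ Icc (0:ℤ) l, (g r (r+1) + g (r+1) r + g (-r-1) (-r) + g (-r) (-r-1)) := by
  have eA : ∑ m ∈ Icc (-(l:ℤ)) 0, g m (m-1) = ∑ r ∈ Icc (0:ℤ) l, g (-r) (-r-1) := by
    rw [sum_neg_reindex]
    simp only [neg_zero, neg_neg]
  have eB : ∑ m ∈ Icc (1:ℤ) l, g m (m-1) = ∑ r ∈ Icc (0:ℤ) ((l:ℤ)-1), g (r+1) r := by
    rw [sum_shift_reindex 1 (l:ℤ) (-1)]
    norm_num
    rw [show (l:ℤ) + -1 = (l:ℤ) - 1 by ring]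
  have eC : ∑ r ∈ Icc (0:ℤ) l, g (r+1) r = ∑ r ∈ Icc (0:ℤ) ((l:ℤ)-1), g (r+1) r :=
    icc_drop_top l _ hg
  have eD : ∑ m ∈ Icc (-(l:ℤ)) (-1), g m (m+1)
      = ∑ r ∈ Icc (0:ℤ) ((l:ℤ)-1), g (-r-1) (-r) := by
    rw [sum_neg_reindex]
    simp only [neg_neg]
    rw [sum_shift_reindex 1 (l:ℤ) (-1)]
    norm_num
    exact Finset.sum_congr rfl fun m _ => by ring_nf
  have eE : ∑ r ∈ Icc (0:ℤ) l, g (-r-1) (-r) = ∑ r ∈ Icc (0:ℤ) ((l:ℤ)-1), g (-r-1) (-r) :=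
    icc_drop_top l _ hg'
  rw [Finset.sum_add_distrib,
    icc_split_at (-(l:ℤ)) 0 l (by omega) (by omega),
    icc_split_at (-(l:ℤ)) (-1) l (by omega) (by omega),
    show Icc ((0:ℤ)+1) (l:ℤ) = Icc 1 (l:ℤ) by norm_num,
    show Icc ((-1:ℤ)+1) (l:ℤ) = Icc 0 (l:ℤ) by norm_num,
    eA, eB, eD]
  conv_rhs => rw [Finset.sum_add_distrib, Finset.sum_add_distrib, Finset.sum_add_distrib]
  rw [eC, eE]
  abel

end Aux
namespace Aux
open Finset
variable (l : ℕ)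

lemma pc_sq {m : ℤ} (h : m ^ 2 ≤ ((l:ℤ) + 1) ^ 2) :
    pc l m ^ 2 = (((l : ℝ) + 1) ^ 2 - (m : ℝ) ^ 2) / ((2 * (l : ℝ) + 1) * (2 * (l : ℝ) + 3)) := by
  have h' : ((m : ℝ)) ^ 2 ≤ ((l : ℝ) + 1) ^ 2 := by exact_mod_cast h
  rw [pc, neg_sq, Real.sq_sqrt (div_nonneg (by linarith) (by positivity))]

lemma pc_even (m : ℤ) : pc l (-m) = pc l m := by
  simp [pc]

lemma pc_neg {m : ℤ} (h : m ^ 2 < ((l:ℤ) + 1) ^ 2) : pc l m < 0 := by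
  have h' : ((m : ℝ)) ^ 2 < ((l : ℝ) + 1) ^ 2 := by exact_mod_cast h
  have : 0 < (((l : ℝ) + 1) ^ 2 - (m : ℝ) ^ 2) / ((2 * (l : ℝ) + 1) * (2 * (l : ℝ) + 3)) := by
    apply div_pos (by linarith) (by positivity)
  simp only [pc, neg_lt, neg_zero]
  exact Real.sqrt_pos.mpr this

lemma sq_bound {m : ℤ} (h1 : -(l:ℤ) ≤ m) (h2 : m ≤ l) : m ^ 2 < ((l:ℤ) + 1) ^ 2 := by nlinarith

lemma pc_nonneg_sq (m : ℤ) : (0:ℝ) ≤ pc l m ^ 2 := sq_nonneg _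

lemma qc_sq {m : ℤ} (h : m ≤ (l:ℤ) + 1) :
    qc l m ^ 2 = ((l : ℝ) - (m : ℝ) + 2) * ((l : ℝ) - (m : ℝ) + 1) /
      (4 * (2 * (l : ℝ) + 1) * (2 * (l : ℝ) + 3)) := by
  have h' : ((m : ℝ)) ≤ (l : ℝ) + 1 := by exact_mod_cast h
  rw [qc, Real.sq_sqrt (div_nonneg (mul_nonneg (by linarith) (by linarith)) (by positivity))]

lemma qc_pos {m : ℤ} (h : m ≤ (l:ℤ)) : 0 < qc l m := by
  have h' : ((m : ℝ)) ≤ (l : ℝ) := by exact_mod_cast h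
  exact Real.sqrt_pos.mpr (div_pos (mul_pos (by linarith) (by linarith)) (by positivity))

lemma qc_top : qc l ((l:ℤ) + 1) = 0 := by
  rw [qc, show ((l : ℝ) - ((((l:ℤ) + 1) : ℤ) : ℝ) + 1) = 0 by push_cast; ring]
  simp

lemma neg_sq_inj {x y : ℝ} (hx : 0 ≤ x) (hy : 0 ≤ y) (h : -x ^ 2 = -y ^ 2) : x = y := by
  nlinarith

lemma pcsq_inj {r r' : ℤ} (hr : 0 ≤ r) (hr2 : r ≤ l) (hr' : 0 ≤ r') (hr2' : r' ≤ l)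
    (h : pc l r ^ 2 = pc l r' ^ 2) : r = r' := by
  rw [pc_sq l (by nlinarith), pc_sq l (by nlinarith)] at h
  have hN : ((2 * (l : ℝ) + 1) * (2 * (l : ℝ) + 3)) ≠ 0 := by positivity
  field_simp at h
  have hr0 : (0:ℝ) ≤ (r : ℝ) := by exact_mod_cast hr
  have hr0' : (0:ℝ) ≤ (r' : ℝ) := by exact_mod_cast hr'
  have h' : ((((l+1)^2 : ℕ)) : ℤ) - r^2 = (((l+1)^2 : ℕ) : ℤ) - r'^2 := by exact_mod_cast h
  have h4 : (r - r') * (r + r') = 0 := by nlinarith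
  rcases mul_eq_zero.mp h4 with h5 | h5
  · omega
  · omega

lemma cluster_inj {r r' : ℤ} (hr : 0 ≤ r) (hr2 : r ≤ l) (hr' : 0 ≤ r') (hr2' : r' ≤ l)
    (h : pc l r ^ 2 + pc l (r+1) ^ 2 = pc l r' ^ 2 + pc l (r'+1) ^ 2) : r = r' := by
  rw [pc_sq l (by nlinarith), pc_sq l (by nlinarith), pc_sq l (by nlinarith),
    pc_sq l (by nlinarith)] at h
  have hN : ((2 * (l : ℝ) + 1) * (2 * (l : ℝ) + 3)) ≠ 0 := by positivity
  have h2 : ((r : ℝ)) ^ 2 + ((r : ℝ) + 1) ^ 2 = ((r' : ℝ)) ^ 2 + ((r' : ℝ) + 1) ^ 2 := by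
    field_simp at h
    push_cast at h ⊢
    nlinarith [h]
  have h3 : r ^ 2 + (r + 1) ^ 2 = r' ^ 2 + (r' + 1) ^ 2 := by exact_mod_cast h2
  have h4 : (r - r') * (r + r' + 1) = 0 := by nlinarith
  rcases mul_eq_zero.mp h4 with h5 | h5
  · omega
  · omega

lemma qcsq_ne {r : ℤ} (h0 : 0 ≤ r) (hl : r ≤ l) : qc l (-r) ^ 2 ≠ qc l (r+1) ^ 2 := by
  rw [qc_sq l (by omega), qc_sq l (by omega)]
  have h1 : (0:ℝ) ≤ (r:ℝ) := by exact_mod_cast h0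
  have h2 : (r:ℝ) ≤ (l:ℝ) := by exact_mod_cast hl
  have hd : (0:ℝ) < 4 * (2 * (l : ℝ) + 1) * (2 * (l : ℝ) + 3) := by positivity
  intro h
  rw [div_eq_div_iff (by positivity) (by positivity)] at h
  have h' := mul_right_cancel₀ (show (4 * (2 * (l:ℝ) + 1) * (2 * (l:ℝ) + 3)) ≠ 0 by positivity) h
  push_cast at h'
  have hl0 : (0:ℝ) ≤ (l:ℝ) := by positivity
  nlinarith

end Aux
namespace Aux
open Finset
variable (l : ℕ)

lemma smul_mem_cancel {K : LieSubalgebra ℝ (Mat l)} {c : ℝ} (hc : c ≠ 0) {x : Mat l}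
    (h : c • x ∈ K) : x ∈ K := by
  have := K.smul_mem c⁻¹ h
  rwa [smul_smul, inv_mul_cancel₀ hc, one_smul] at this

lemma extract_two (K : LieSubalgebra ℝ (Mat l)) (D : Mat l) (hD : D ∈ K) (x y : Mat l)
    (lam1 lam2 : ℝ) (h1 : ⁅D, ⁅D, x⁆⁆ = lam1 • x) (h2 : ⁅D, ⁅D, y⁆⁆ = lam2 • y)
    (hne : lam1 ≠ lam2) (hxy : x + y ∈ K) : x ∈ K ∧ y ∈ K := by
  have hTv : lam1 • x + lam2 • y ∈ K := by
    have := K.lie_mem hD (K.lie_mem hD hxy)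
    rwa [lie_add, lie_add, h1, h2] at this
  have hx : (lam1 - lam2) • x ∈ K := by
    have := K.sub_mem hTv (K.smul_mem lam2 hxy)
    rwa [show lam1 • x + lam2 • y - lam2 • (x + y) = (lam1 - lam2) • x by module] at this
  have hx' : x ∈ K := smul_mem_cancel l (sub_ne_zero.mpr hne) hx
  refine ⟨hx', ?_⟩
  have := K.sub_mem hxy hx'
  rwa [add_sub_cancel_left] at this

lemma extract {ι : Type*} [DecidableEq ι] (K : LieSubalgebra ℝ (Mat l)) (D : Mat l) (hD : D ∈ K)
    (s : Finset ι) (w : ι → Mat l) (lam : ι → ℝ)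
    (hinj : ∀ i ∈ s, ∀ j ∈ s, lam i = lam j → i = j)
    (heig : ∀ i ∈ s, ⁅D, ⁅D, w i⁆⁆ = lam i • w i)
    (hsum : ∑ i ∈ s, w i ∈ K) : ∀ i ∈ s, w i ∈ K := by
  induction s using Finset.induction generalizing w with
  | empty => intro i hi; simp at hi
  | @insert a s ha ih =>
    intro i hi
    have hv := hsum
    have hTv' : (∑ j ∈ insert a s, lam j • w j) ∈ K := by
      have hmem := K.lie_mem hD (K.lie_mem hD hv)
      have heq : ⁅D, ⁅D, ∑ j ∈ insert a s, w j⁆⁆ = ∑ j ∈ insert a s, lam j • w j := by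
        rw [lie_sum' l, lie_sum' l]
        exact Finset.sum_congr rfl fun j hj => heig j hj
      rwa [heq] at hmem
    have hu : (∑ j ∈ s, (lam j - lam a) • w j) ∈ K := by
      have heq : ∑ j ∈ s, (lam j - lam a) • w j
          = (∑ j ∈ insert a s, lam j • w j) - lam a • ∑ j ∈ insert a s, w j := by
        rw [Finset.smul_sum, Finset.sum_insert ha, Finset.sum_insert ha]
        rw [show lam a • w a + ∑ j ∈ s, lam j • w j - (lam a • w a + ∑ j ∈ s, lam a • w j)
          = ∑ j ∈ s, lam j • w j - ∑ j ∈ s, lam a • w j by abel]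
        rw [← Finset.sum_sub_distrib]
        exact Finset.sum_congr rfl fun j _ => by rw [sub_smul]
      rw [heq]
      exact K.sub_mem hTv' (K.smul_mem _ hv)
    have hws : ∀ j ∈ s, w j ∈ K := by
      intro j hj
      have hrec := ih (fun j => (lam j - lam a) • w j)
        (fun i hi j hj h => hinj i (Finset.mem_insert_of_mem hi) j (Finset.mem_insert_of_mem hj) h)
        (fun i hi => by
          rw [lie_smul, lie_smul, heig i (Finset.mem_insert_of_mem hi), smul_comm])
        hu j hj
      have hne : lam j - lam a ≠ 0 := by
        refine sub_ne_zero.mpr fun hEq => ha ?_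
        rwa [hinj j (Finset.mem_insert_of_mem hj) a (Finset.mem_insert_self a s) hEq] at hj
      exact smul_mem_cancel l hne hrec
    rcases Finset.mem_insert.mp hi with rfl | hi'
    · have heq : w i = (∑ j ∈ insert i s, w j) - ∑ j ∈ s, w j := by
        rw [Finset.sum_insert ha]; abel
      rw [heq]
      exact K.sub_mem hv (Submodule.sum_mem K.toSubmodule fun j hj => hws j hj)
    · exact hws i hi'

end Aux
namespace Aux
open Finset
variable (l : ℕ)

lemma Em_zero_left {a : ℤ × ℤ} (h : a ∉ Jset l) (b : ℤ × ℤ) : Em l a b = 0 := by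
  rw [Em, eM_zero_left l h, eM_zero_right l _ h, sub_zero]

lemma pc_top : pc l ((l:ℤ) + 1) = 0 := by
  rw [pc, show (((l : ℝ)) + 1) ^ 2 - (((((l:ℤ) + 1) : ℤ) : ℝ)) ^ 2 = 0 by push_cast; ring]
  simp

lemma pc_bot : pc l (-((l:ℤ) + 1)) = 0 := by
  rw [pc, show (((l : ℝ)) + 1) ^ 2 - ((((-((l:ℤ) + 1)) : ℤ) : ℝ)) ^ 2 = 0 by push_cast; ring]
  simp

lemma sum_diag_apply (lo hi j : ℤ) (f : ℤ → ℂ) (x y : Jset l) :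
    (∑ k ∈ Icc lo hi, f k • eM l (j, k) (j, k)) x y
      = if x = y ∧ (x:ℤ×ℤ).1 = j ∧ lo ≤ (x:ℤ×ℤ).2 ∧ (x:ℤ×ℤ).2 ≤ hi
        then f (x:ℤ×ℤ).2 else 0 := by
  rw [Matrix.sum_apply]
  by_cases h : x = y ∧ (x:ℤ×ℤ).1 = j ∧ lo ≤ (x:ℤ×ℤ).2 ∧ (x:ℤ×ℤ).2 ≤ hi
  · obtain ⟨rfl, hj, h1, h2⟩ := h
    rw [if_pos ⟨rfl, hj, h1, h2⟩]
    rw [Finset.sum_eq_single (x:ℤ×ℤ).2]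
    · have hx : (x : ℤ×ℤ) = (j, (x:ℤ×ℤ).2) := by
        rw [← hj]
      rw [Matrix.smul_apply]
      simp only [eM]
      rw [if_pos ⟨hx, hx⟩, smul_eq_mul, mul_one]
    · intro k hk hkne
      rw [Matrix.smul_apply]
      simp only [eM]
      rw [if_neg, smul_zero]
      rintro ⟨hxj, -⟩
      exact hkne (by rw [hxj])
    · intro hnot
      exact absurd (Finset.mem_Icc.mpr ⟨h1, h2⟩) hnot
  · rw [if_neg h, Finset.sum_eq_zero]
    intro k hk
    rw [Matrix.smul_apply]
    simp only [eM]
    rw [if_neg, smul_zero]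
    rintro ⟨hxj, hyj⟩
    apply h
    have hxy : x = y := Subtype.ext (hxj.trans hyj.symm)
    simp only [Finset.mem_Icc] at hk
    refine ⟨hxy, ?_, ?_, ?_⟩ <;> rw [hxj] <;> simp <;> omega

end Aux
namespace Aux
open Finset
variable (l : ℕ)

noncomputable def gA : ℤ × ℤ → ℝ := fun c => if c.1 = (l:ℤ) then (2*(l:ℝ)+3)/2 else -((2*(l:ℝ)+1)/2)

lemma gA_pa (m : ℤ) : gA l (pa l m) = (2*(l:ℝ)+3)/2 := if_pos rfl
lemma gA_pb (m : ℤ) : gA l (pb l m) = -((2*(l:ℝ)+1)/2) := if_neg (by simp [pb])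

lemma Am_eq : Am l = diagM l (gA l) := by
  ext x y
  rw [Am, Matrix.add_apply, sum_diag_apply, sum_diag_apply]
  rcases mem_Jset_cases l x.2 with ⟨h1, h2, h3⟩ | ⟨h1, h2, h3⟩ <;> by_cases hxy : x = y
  · subst hxy
    rw [if_pos ⟨rfl, h1, h2, h3⟩, if_neg (by rintro ⟨-, hh, -⟩; omega)]
    simp only [diagM, Matrix.diagonal_apply_eq, gA, h1, if_pos]
    push_cast
    ring
  · rw [if_neg (by tauto), if_neg (by tauto)]
    simp [diagM, Matrix.diagonal_apply_ne _ hxy]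
  · subst hxy
    rw [if_neg (by rintro ⟨-, hh, -⟩; omega), if_pos ⟨rfl, h1, by omega, by omega⟩]
    simp only [diagM, Matrix.diagonal_apply_eq, gA, h1]
    rw [if_neg (by omega)]
    push_cast
    ring
  · rw [if_neg (by tauto), if_neg (by tauto)]
    simp [diagM, Matrix.diagonal_apply_ne _ hxy]

end Aux
namespace Aux
open Finset
variable (l : ℕ)

noncomputable def g0 : ℤ × ℤ → ℝ := fun c => if c.1 = (l:ℤ) then pc l c.2 ^ 2 else -(pc l c.2 ^ 2)

lemma g0_pa (m : ℤ) : g0 l (pa l m) = pc l m ^ 2 := if_pos rfl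
lemma g0_pb (m : ℤ) : g0 l (pb l m) = -(pc l m ^ 2) := if_neg (by simp [pb])

lemma sum_Dm_eq :
    ∑ m ∈ Icc (-(l:ℤ)) l, ((2 * pc l m ^ 2) • Dm l (pa l m) (pb l m))
      = (2:ℝ) • diagM l (g0 l) := by
  have hterm : ∀ m : ℤ, (2 * pc l m ^ 2) • Dm l (pa l m) (pb l m)
      = (((2 * pc l m ^ 2 : ℝ) : ℂ) * Complex.I) • eM l ((l:ℤ), m) ((l:ℤ), m)
        - (((2 * pc l m ^ 2 : ℝ) : ℂ) * Complex.I) • eM l ((l:ℤ)+1, m) ((l:ℤ)+1, m) := by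
    intro m
    rw [Dm, rsmul, smul_sub, smul_smul, smul_smul]
    rfl
  simp only [hterm]
  rw [Finset.sum_sub_distrib]
  ext x y
  rw [Matrix.sub_apply, sum_diag_apply, sum_diag_apply, Matrix.smul_apply]
  rcases mem_Jset_cases l x.2 with ⟨h1, h2, h3⟩ | ⟨h1, h2, h3⟩ <;> by_cases hxy : x = y
  · subst hxy
    rw [if_pos ⟨rfl, h1, h2, h3⟩, if_neg (by rintro ⟨-, hh, -⟩; omega)]
    simp only [diagM, Matrix.diagonal_apply_eq, g0, h1, if_pos, Complex.real_smul]
    push_cast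
    ring
  · rw [if_neg (by tauto), if_neg (by tauto)]
    simp [diagM, Matrix.diagonal_apply_ne _ hxy]
  · subst hxy
    rw [if_neg (by rintro ⟨-, hh, -⟩; omega)]
    by_cases hin : -(l:ℤ) ≤ (x:ℤ×ℤ).2 ∧ (x:ℤ×ℤ).2 ≤ l
    · rw [if_pos ⟨rfl, h1, hin.1, hin.2⟩]
      simp only [diagM, Matrix.diagonal_apply_eq, g0, h1, Complex.real_smul]
      rw [if_neg (by omega)]
      push_cast
      ring
    · rw [if_neg (by tauto)]
      have hx2 : (x:ℤ×ℤ).2 = (l:ℤ)+1 ∨ (x:ℤ×ℤ).2 = -((l:ℤ)+1) := by omega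
      simp only [diagM, Matrix.diagonal_apply_eq, g0, h1, Complex.real_smul]
      rw [if_neg (by omega)]
      have pcb : pc l (-1 + -(l:ℤ)) = 0 := by
        rw [show (-1 + -(l:ℤ)) = -((l:ℤ)+1) by ring]
        exact pc_bot l
      rcases hx2 with hx2 | hx2 <;> rw [hx2] <;>
        simp [pc_top, pc_bot, pcb]
  · rw [if_neg (by tauto), if_neg (by tauto)]
    simp [diagM, Matrix.diagonal_apply_ne _ hxy]

lemma diagM_pair (c₁ d₁ c₂ d₂ : ℤ × ℤ) (t u : ℝ)
    (h12 : c₁ ≠ d₁) (h13 : c₁ ≠ c₂) (h14 : c₁ ≠ d₂) (h23 : d₁ ≠ c₂) (h24 : d₁ ≠ d₂)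
    (h34 : c₂ ≠ d₂) :
    diagM l (fun x => (if x = c₁ then t else 0) - (if x = d₁ then t else 0)
      + ((if x = c₂ then u else 0) - (if x = d₂ then u else 0)))
      = t • Dm l c₁ d₁ + u • Dm l c₂ d₂ := by
  ext x y
  by_cases hxy : x = y
  · subst hxy
    simp only [diagM, Matrix.diagonal_apply_eq, Dm, Matrix.add_apply, Matrix.smul_apply,
      Matrix.sub_apply, eM, Complex.real_smul, and_self]
    by_cases e1 : (x:ℤ×ℤ) = c₁ <;> by_cases e2 : (x:ℤ×ℤ) = d₁ <;>
      by_cases e3 : (x:ℤ×ℤ) = c₂ <;> by_cases e4 : (x:ℤ×ℤ) = d₂ <;>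
      simp_all <;> push_cast <;> ring
  · have hz : ∀ c : ℤ×ℤ, eM l c c x y = 0 := by
      intro c
      simp only [eM, ite_eq_right_iff]
      rintro ⟨hc1, hc2⟩
      exact absurd (Subtype.ext (hc1.trans hc2.symm)) hxy
    simp [diagM, Matrix.diagonal_apply_ne _ hxy, Dm, hz]

end Aux
namespace Aux
open Finset
variable (l : ℕ)

noncomputable def KK : LieSubalgebra ℝ (Mat l) :=
  LieSubalgebra.lieSpan ℝ (Mat l) {Am l, B1 l, B2 l, B3 l}

lemma hAm : Am l ∈ KK l := LieSubalgebra.subset_lieSpan (by simp)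
lemma hB1 : B1 l ∈ KK l := LieSubalgebra.subset_lieSpan (by simp)
lemma hB2 : B2 l ∈ KK l := LieSubalgebra.subset_lieSpan (by simp)
lemma hB3 : B3 l ∈ KK l := LieSubalgebra.subset_lieSpan (by simp)

lemma hmu : (2*(l:ℝ)+2) ≠ 0 := by positivity

lemma Am_lie_Fm (m n : ℤ) :
    ⁅Am l, Fm l (pa l m) (pb l n)⁆ = (-(2*(l:ℝ)+2)) • Em l (pa l m) (pb l n) := by
  rw [Am_eq, diagM_lie_Fm, gA_pa, gA_pb]
  congr 1
  ring

lemma Am_lie_Em (m n : ℤ) :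
    ⁅Am l, Em l (pa l m) (pb l n)⁆ = (2*(l:ℝ)+2) • Fm l (pa l m) (pb l n) := by
  rw [Am_eq, diagM_lie_Em, gA_pa, gA_pb]
  congr 1
  ring

lemma smul_flip {c : ℝ} (hc : c ≠ 0) {x y : Mat l} (h : x = c • y) (hx : x ∈ KK l) :
    y ∈ KK l := by
  apply smul_mem_cancel l hc
  rwa [← h]

lemma hSC3 : (∑ m ∈ Icc (-(l:ℤ)) l, pc l m • Em l (pa l m) (pb l m)) ∈ KK l := by
  apply smul_flip l (neg_ne_zero.mpr (hmu l)) (x := ⁅Am l, B3 l⁆)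
  · rw [show B3 l = ∑ m ∈ Icc (-(l:ℤ)) l, pc l m • Fm l (pa l m) (pb l m) from rfl,
      lie_sum' l, Finset.smul_sum]
    refine Finset.sum_congr rfl fun m _ => ?_
    rw [lie_smul, Am_lie_Fm, smul_comm]
  · exact (KK l).lie_mem (hAm l) (hB3 l)

lemma hSC1 : (∑ m ∈ Icc (-(l:ℤ)) l,
    ((-qc l m) • Em l (pa l m) (pb l (m-1)) + qc l (-m) • Em l (pa l m) (pb l (m+1)))) ∈ KK l := by
  apply smul_flip l (neg_ne_zero.mpr (hmu l)) (x := ⁅Am l, B1 l⁆)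
  · rw [show B1 l = ∑ m ∈ Icc (-(l:ℤ)) l,
        ((-qc l m) • Fm l (pa l m) (pb l (m-1)) + qc l (-m) • Fm l (pa l m) (pb l (m+1))) from rfl,
      lie_sum' l, Finset.smul_sum]
    refine Finset.sum_congr rfl fun m _ => ?_
    rw [lie_add, lie_smul, lie_smul, Am_lie_Fm, Am_lie_Fm]
    module
  · exact (KK l).lie_mem (hAm l) (hB1 l)

lemma hSC2 : (∑ m ∈ Icc (-(l:ℤ)) l,
    (qc l m • Fm l (pa l m) (pb l (m-1)) + qc l (-m) • Fm l (pa l m) (pb l (m+1)))) ∈ KK l := by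
  apply smul_flip l (hmu l) (x := ⁅Am l, B2 l⁆)
  · rw [show B2 l = ∑ m ∈ Icc (-(l:ℤ)) l,
        (qc l m • Em l (pa l m) (pb l (m-1)) + qc l (-m) • Em l (pa l m) (pb l (m+1))) from rfl,
      lie_sum' l, Finset.smul_sum]
    refine Finset.sum_congr rfl fun m _ => ?_
    rw [lie_add, lie_smul, lie_smul, Am_lie_Em, Am_lie_Em]
    module
  · exact (KK l).lie_mem (hAm l) (hB2 l)

lemma hD0 : diagM l (g0 l) ∈ KK l := by
  apply smul_flip l (two_ne_zero) (x := ⁅∑ m ∈ Icc (-(l:ℤ)) l, pc l m • Em l (pa l m) (pb l m), B3 l⁆)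
  · rw [show B3 l = ∑ m ∈ Icc (-(l:ℤ)) l, pc l m • Fm l (pa l m) (pb l m) from rfl,
      lie_sum_sum_diag l _ _ _ (fun m hm n hn hmn => by
        rw [smul_lie, lie_smul, lie_Em_Fm_zero l (by simp [hmn]) (pa_ne_pb l m n)
          (pb_ne_pa l m n) (by simp [hmn]), smul_zero, smul_zero]),
      ← sum_Dm_eq]
    refine Finset.sum_congr rfl fun m hm => ?_
    simp only [Finset.mem_Icc] at hm
    rw [smul_lie, lie_smul, lie_Em_Fm_same l (pa_mem l hm.1 hm.2)
      (pb_mem l (by omega) (by omega)) (pa_ne_pb l m m), smul_smul, smul_smul]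
    congr 1
    ring
  · exact (KK l).lie_mem (hSC3 l) (hB3 l)

end Aux
namespace Aux
open Finset
variable (l : ℕ)

noncomputable def w3 (r : ℤ) : Mat l :=
  if r = 0 then pc l 0 • Fm l (pa l 0) (pb l 0)
  else pc l r • Fm l (pa l r) (pb l r) + pc l (-r) • Fm l (pa l (-r)) (pb l (-r))

lemma hsum3 : ∑ r ∈ Icc (0:ℤ) l, w3 l r = B3 l := by
  rw [show B3 l = ∑ m ∈ Icc (-(l:ℤ)) l, pc l m • Fm l (pa l m) (pb l m) from rfl,
    regroup2 l, icc_insert_zero l]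
  have h1 : w3 l 0 = pc l 0 • Fm l (pa l 0) (pb l 0) := by simp [w3]
  have h2 : ∀ r ∈ Icc (1:ℤ) l, w3 l r
      = pc l r • Fm l (pa l r) (pb l r) + pc l (-r) • Fm l (pa l (-r)) (pb l (-r)) := by
    intro r hr
    simp only [Finset.mem_Icc] at hr
    rw [w3, if_neg (by omega)]
  rw [h1, Finset.sum_congr rfl h2]

lemma heig3 : ∀ r ∈ Icc (0:ℤ) l,
    ⁅diagM l (g0 l), ⁅diagM l (g0 l), w3 l r⁆⁆ = (-(2 * pc l r ^ 2) ^ 2) • w3 l r := by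
  intro r hr
  by_cases h0 : r = 0
  · subst h0
    rw [w3, if_pos rfl, lie_smul, lie_smul, diagM_ad2_Fm, g0_pa, g0_pb, smul_smul, smul_smul]
    congr 1
    ring
  · rw [w3, if_neg h0, lie_add, lie_add, lie_smul, lie_smul, lie_smul, lie_smul,
      diagM_ad2_Fm, diagM_ad2_Fm, g0_pa, g0_pb, g0_pa, g0_pb, pc_even]
    module

lemma hinj3 : ∀ r ∈ Icc (0:ℤ) l, ∀ r' ∈ Icc (0:ℤ) l,
    (-(2 * pc l r ^ 2) ^ 2) = (-(2 * pc l r' ^ 2) ^ 2) → r = r' := by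
  intro r hr r' hr'
  simp only [Finset.mem_Icc] at hr hr'
  intro h
  have h2 : 2 * pc l r ^ 2 = 2 * pc l r' ^ 2 :=
    neg_sq_inj (by positivity) (by positivity) h
  exact pcsq_inj l hr.1 hr.2 hr'.1 hr'.2 (by linarith)

lemma hw3mem : ∀ r ∈ Icc (0:ℤ) l, w3 l r ∈ KK l := by
  apply extract l (KK l) _ (hD0 l) _ _ _ (hinj3 l) (heig3 l)
  rw [hsum3]
  exact hB3 l

lemma pc_ne_zero {m : ℤ} (h1 : -(l:ℤ) ≤ m) (h2 : m ≤ l) : pc l m ≠ 0 :=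
  ne_of_lt (pc_neg l (sq_bound l h1 h2))

lemma hF00 : Fm l (pa l 0) (pb l 0) ∈ KK l := by
  have := hw3mem l 0 (by simp [Finset.mem_Icc])
  rw [w3, if_pos rfl] at this
  exact smul_mem_cancel l (pc_ne_zero l (by omega) (by omega)) this

lemma hG : ∀ r ∈ Icc (1:ℤ) l,
    (pc l r • Fm l (pa l r) (pb l r) + pc l (-r) • Fm l (pa l (-r)) (pb l (-r))) ∈ KK l := by
  intro r hr
  simp only [Finset.mem_Icc] at hr
  have := hw3mem l r (by simp [Finset.mem_Icc]; omega)
  rwa [w3, if_neg (by omega)] at this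

end Aux
namespace Aux
open Finset
variable (l : ℕ)

noncomputable def wB2 (r : ℤ) : Mat l :=
  qc l (-r) • Em l (pa l r) (pb l (r+1)) + qc l (r+1) • Em l (pa l (r+1)) (pb l r)
  + qc l (r+1) • Em l (pa l (-r-1)) (pb l (-r)) + qc l (-r) • Em l (pa l (-r)) (pb l (-r-1))

noncomputable def wC2 (r : ℤ) : Mat l :=
  qc l (-r) • Fm l (pa l r) (pb l (r+1)) + qc l (r+1) • Fm l (pa l (r+1)) (pb l r)
  + qc l (r+1) • Fm l (pa l (-r-1)) (pb l (-r)) + qc l (-r) • Fm l (pa l (-r)) (pb l (-r-1))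

noncomputable def wB1 (r : ℤ) : Mat l :=
  qc l (-r) • Fm l (pa l r) (pb l (r+1)) + (-(qc l (r+1))) • Fm l (pa l (r+1)) (pb l r)
  + qc l (r+1) • Fm l (pa l (-r-1)) (pb l (-r)) + (-(qc l (-r))) • Fm l (pa l (-r)) (pb l (-r-1))

noncomputable def wC1 (r : ℤ) : Mat l :=
  qc l (-r) • Em l (pa l r) (pb l (r+1)) + (-(qc l (r+1))) • Em l (pa l (r+1)) (pb l r)
  + qc l (r+1) • Em l (pa l (-r-1)) (pb l (-r)) + (-(qc l (-r))) • Em l (pa l (-r)) (pb l (-r-1))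

lemma hsumB2 : ∑ r ∈ Icc (0:ℤ) l, wB2 l r = B2 l := by
  have hB2eq : B2 l = ∑ m ∈ Icc (-(l:ℤ)) l,
      ((fun m n => qc l (m*(m-n)) • Em l (pa l m) (pb l n)) m (m-1)
        + (fun m n => qc l (m*(m-n)) • Em l (pa l m) (pb l n)) m (m+1)) := by
    refine Finset.sum_congr rfl fun m _ => ?_
    dsimp only
    rw [show m*(m-(m-1)) = m by ring, show m*(m-(m+1)) = -m by ring]
    all_goals exact rfl
  rw [hB2eq, regroup l (fun m n => qc l (m*(m-n)) • Em l (pa l m) (pb l n))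
    (by rw [show ((l:ℤ)+1)*(((l:ℤ)+1)-(l:ℤ)) = (l:ℤ)+1 by ring, qc_top, zero_smul])
    (by rw [show (-(l:ℤ)-1)*((-(l:ℤ)-1)-(-(l:ℤ))) = (l:ℤ)+1 by ring, qc_top, zero_smul])]
  refine Finset.sum_congr rfl fun r _ => ?_
  rw [wB2, show r*(r-(r+1)) = -r by ring, show (r+1)*((r+1)-r) = r+1 by ring,
    show (-r-1)*((-r-1)-(-r)) = r+1 by ring, show (-r)*((-r)-(-r-1)) = -r by ring]

lemma hsumC2 : ∑ r ∈ Icc (0:ℤ) l, wC2 l r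
    = ∑ m ∈ Icc (-(l:ℤ)) l,
      (qc l m • Fm l (pa l m) (pb l (m-1)) + qc l (-m) • Fm l (pa l m) (pb l (m+1))) := by
  have heq : ∑ m ∈ Icc (-(l:ℤ)) l,
      (qc l m • Fm l (pa l m) (pb l (m-1)) + qc l (-m) • Fm l (pa l m) (pb l (m+1)))
      = ∑ m ∈ Icc (-(l:ℤ)) l,
      ((fun m n => qc l (m*(m-n)) • Fm l (pa l m) (pb l n)) m (m-1)
        + (fun m n => qc l (m*(m-n)) • Fm l (pa l m) (pb l n)) m (m+1)) := by
    refine Finset.sum_congr rfl fun m _ => ?_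
    dsimp only
    rw [show m*(m-(m-1)) = m by ring, show m*(m-(m+1)) = -m by ring]
    all_goals exact rfl
  rw [heq, regroup l (fun m n => qc l (m*(m-n)) • Fm l (pa l m) (pb l n))
    (by rw [show ((l:ℤ)+1)*(((l:ℤ)+1)-(l:ℤ)) = (l:ℤ)+1 by ring, qc_top, zero_smul])
    (by rw [show (-(l:ℤ)-1)*((-(l:ℤ)-1)-(-(l:ℤ))) = (l:ℤ)+1 by ring, qc_top, zero_smul])]
  refine Finset.sum_congr rfl fun r _ => ?_
  rw [wC2, show r*(r-(r+1)) = -r by ring, show (r+1)*((r+1)-r) = r+1 by ring,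
    show (-r-1)*((-r-1)-(-r)) = r+1 by ring, show (-r)*((-r)-(-r-1)) = -r by ring]

lemma hsumB1 : ∑ r ∈ Icc (0:ℤ) l, wB1 l r = B1 l := by
  have hB1eq : B1 l = ∑ m ∈ Icc (-(l:ℤ)) l,
      ((fun m n => (((n - m : ℤ) : ℝ) * qc l (m*(m-n))) • Fm l (pa l m) (pb l n)) m (m-1)
        + (fun m n => (((n - m : ℤ) : ℝ) * qc l (m*(m-n))) • Fm l (pa l m) (pb l n)) m (m+1)) := by
    refine Finset.sum_congr rfl fun m _ => ?_
    dsimp only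
    rw [show ((((m-1) - m : ℤ) : ℝ) * qc l (m*(m-(m-1)))) = -(qc l m) by
        rw [show m*(m-(m-1)) = m by ring]; push_cast; ring,
      show ((((m+1) - m : ℤ) : ℝ) * qc l (m*(m-(m+1)))) = qc l (-m) by
        rw [show m*(m-(m+1)) = -m by ring]; push_cast; ring]
    all_goals exact rfl
  rw [hB1eq, regroup l (fun m n => (((n - m : ℤ) : ℝ) * qc l (m*(m-n))) • Fm l (pa l m) (pb l n))
    (by rw [show ((l:ℤ)+1)*(((l:ℤ)+1)-(l:ℤ)) = (l:ℤ)+1 by ring, qc_top, mul_zero, zero_smul])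
    (by rw [show (-(l:ℤ)-1)*((-(l:ℤ)-1)-(-(l:ℤ))) = (l:ℤ)+1 by ring, qc_top, mul_zero,
      zero_smul])]
  refine Finset.sum_congr rfl fun r _ => ?_
  rw [wB1,
    show (((r+1) - r : ℤ) : ℝ) * qc l (r*(r-(r+1))) = qc l (-r) by
      rw [show r*(r-(r+1)) = -r by ring]; push_cast; ring,
    show (((r - (r+1) : ℤ)) : ℝ) * qc l ((r+1)*((r+1)-r)) = -(qc l (r+1)) by
      rw [show (r+1)*((r+1)-r) = r+1 by ring]; push_cast; ring,
    show ((((-r) - (-r-1) : ℤ)) : ℝ) * qc l ((-r-1)*((-r-1)-(-r))) = qc l (r+1) by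
      rw [show (-r-1)*((-r-1)-(-r)) = r+1 by ring]; push_cast; ring,
    show ((((-r-1) - (-r) : ℤ)) : ℝ) * qc l ((-r)*((-r)-(-r-1))) = -(qc l (-r)) by
      rw [show (-r)*((-r)-(-r-1)) = -r by ring]; push_cast; ring]

lemma hsumC1 : ∑ r ∈ Icc (0:ℤ) l, wC1 l r
    = ∑ m ∈ Icc (-(l:ℤ)) l,
      ((-qc l m) • Em l (pa l m) (pb l (m-1)) + qc l (-m) • Em l (pa l m) (pb l (m+1))) := by
  have heq : ∑ m ∈ Icc (-(l:ℤ)) l,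
      ((-qc l m) • Em l (pa l m) (pb l (m-1)) + qc l (-m) • Em l (pa l m) (pb l (m+1)))
      = ∑ m ∈ Icc (-(l:ℤ)) l,
      ((fun m n => (((n - m : ℤ) : ℝ) * qc l (m*(m-n))) • Em l (pa l m) (pb l n)) m (m-1)
        + (fun m n => (((n - m : ℤ) : ℝ) * qc l (m*(m-n))) • Em l (pa l m) (pb l n)) m (m+1)) := by
    refine Finset.sum_congr rfl fun m _ => ?_
    dsimp only
    rw [show ((((m-1) - m : ℤ) : ℝ) * qc l (m*(m-(m-1)))) = -(qc l m) by
        rw [show m*(m-(m-1)) = m by ring]; push_cast; ring,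
      show ((((m+1) - m : ℤ) : ℝ) * qc l (m*(m-(m+1)))) = qc l (-m) by
        rw [show m*(m-(m+1)) = -m by ring]; push_cast; ring]
    all_goals exact rfl
  rw [heq, regroup l (fun m n => (((n - m : ℤ) : ℝ) * qc l (m*(m-n))) • Em l (pa l m) (pb l n))
    (by rw [show ((l:ℤ)+1)*(((l:ℤ)+1)-(l:ℤ)) = (l:ℤ)+1 by ring, qc_top, mul_zero, zero_smul])
    (by rw [show (-(l:ℤ)-1)*((-(l:ℤ)-1)-(-(l:ℤ))) = (l:ℤ)+1 by ring, qc_top, mul_zero,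
      zero_smul])]
  refine Finset.sum_congr rfl fun r _ => ?_
  rw [wC1,
    show (((r+1) - r : ℤ) : ℝ) * qc l (r*(r-(r+1))) = qc l (-r) by
      rw [show r*(r-(r+1)) = -r by ring]; push_cast; ring,
    show (((r - (r+1) : ℤ)) : ℝ) * qc l ((r+1)*((r+1)-r)) = -(qc l (r+1)) by
      rw [show (r+1)*((r+1)-r) = r+1 by ring]; push_cast; ring,
    show ((((-r) - (-r-1) : ℤ)) : ℝ) * qc l ((-r-1)*((-r-1)-(-r))) = qc l (r+1) by
      rw [show (-r-1)*((-r-1)-(-r)) = r+1 by ring]; push_cast; ring,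
    show ((((-r-1) - (-r) : ℤ)) : ℝ) * qc l ((-r)*((-r)-(-r-1))) = -(qc l (-r)) by
      rw [show (-r)*((-r)-(-r-1)) = -r by ring]; push_cast; ring]

lemma pc_shift (r : ℤ) : pc l (-r-1) = pc l (r+1) := by
  rw [show (-r-1:ℤ) = -(r+1) by ring, pc_even]

lemma heigB2 : ∀ r ∈ Icc (0:ℤ) l, ⁅diagM l (g0 l), ⁅diagM l (g0 l), wB2 l r⁆⁆
    = (-(pc l r ^ 2 + pc l (r+1) ^ 2) ^ 2) • wB2 l r := by
  intro r _
  simp only [wB2, lie_add, lie_smul, diagM_ad2_Em, g0_pa, g0_pb, pc_shift, pc_even]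
  module

lemma heigC2 : ∀ r ∈ Icc (0:ℤ) l, ⁅diagM l (g0 l), ⁅diagM l (g0 l), wC2 l r⁆⁆
    = (-(pc l r ^ 2 + pc l (r+1) ^ 2) ^ 2) • wC2 l r := by
  intro r _
  simp only [wC2, lie_add, lie_smul, diagM_ad2_Fm, g0_pa, g0_pb, pc_shift, pc_even]
  module

lemma heigB1 : ∀ r ∈ Icc (0:ℤ) l, ⁅diagM l (g0 l), ⁅diagM l (g0 l), wB1 l r⁆⁆
    = (-(pc l r ^ 2 + pc l (r+1) ^ 2) ^ 2) • wB1 l r := by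
  intro r _
  simp only [wB1, lie_add, lie_smul, diagM_ad2_Fm, g0_pa, g0_pb, pc_shift, pc_even]
  module

lemma heigC1 : ∀ r ∈ Icc (0:ℤ) l, ⁅diagM l (g0 l), ⁅diagM l (g0 l), wC1 l r⁆⁆
    = (-(pc l r ^ 2 + pc l (r+1) ^ 2) ^ 2) • wC1 l r := by
  intro r _
  simp only [wC1, lie_add, lie_smul, diagM_ad2_Em, g0_pa, g0_pb, pc_shift, pc_even]
  module

lemma hinjX : ∀ r ∈ Icc (0:ℤ) l, ∀ r' ∈ Icc (0:ℤ) l,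
    (-(pc l r ^ 2 + pc l (r+1) ^ 2) ^ 2) = (-(pc l r' ^ 2 + pc l (r'+1) ^ 2) ^ 2) → r = r' := by
  intro r hr r' hr'
  simp only [Finset.mem_Icc] at hr hr'
  intro h
  exact cluster_inj l hr.1 hr.2 hr'.1 hr'.2
    (neg_sq_inj (by positivity) (by positivity) h)

lemma hWB2 : ∀ r ∈ Icc (0:ℤ) l, wB2 l r ∈ KK l := by
  apply extract l (KK l) _ (hD0 l) _ _ _ (hinjX l) (heigB2 l)
  rw [hsumB2]
  exact hB2 l

lemma hWC2 : ∀ r ∈ Icc (0:ℤ) l, wC2 l r ∈ KK l := by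
  apply extract l (KK l) _ (hD0 l) _ _ _ (hinjX l) (heigC2 l)
  rw [hsumC2]
  exact hSC2 l

lemma hWB1 : ∀ r ∈ Icc (0:ℤ) l, wB1 l r ∈ KK l := by
  apply extract l (KK l) _ (hD0 l) _ _ _ (hinjX l) (heigB1 l)
  rw [hsumB1]
  exact hB1 l

lemma hWC1 : ∀ r ∈ Icc (0:ℤ) l, wC1 l r ∈ KK l := by
  apply extract l (KK l) _ (hD0 l) _ _ _ (hinjX l) (heigC1 l)
  rw [hsumC1]
  exact hSC1 l

end Aux
namespace Aux
open Finset
variable (l : ℕ)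

noncomputable def Pm (r : ℤ) : Mat l :=
  qc l (-r) • Em l (pa l r) (pb l (r+1)) + qc l (r+1) • Em l (pa l (-r-1)) (pb l (-r))
noncomputable def Qm (r : ℤ) : Mat l :=
  qc l (r+1) • Em l (pa l (r+1)) (pb l r) + qc l (-r) • Em l (pa l (-r)) (pb l (-r-1))
noncomputable def Pf (r : ℤ) : Mat l :=
  qc l (-r) • Fm l (pa l r) (pb l (r+1)) + qc l (r+1) • Fm l (pa l (-r-1)) (pb l (-r))
noncomputable def Qf (r : ℤ) : Mat l :=
  qc l (r+1) • Fm l (pa l (r+1)) (pb l r) + qc l (-r) • Fm l (pa l (-r)) (pb l (-r-1))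

lemma hPm (r : ℤ) (hr : r ∈ Icc (0:ℤ) l) : Pm l r ∈ KK l := by
  have h := (KK l).smul_mem (2⁻¹ : ℝ) ((KK l).add_mem (hWB2 l r hr) (hWC1 l r hr))
  rwa [show (2⁻¹:ℝ) • (wB2 l r + wC1 l r) = Pm l r by
    simp only [wB2, wC1, Pm]; module] at h

lemma hQm (r : ℤ) (hr : r ∈ Icc (0:ℤ) l) : Qm l r ∈ KK l := by
  have h := (KK l).smul_mem (2⁻¹ : ℝ) ((KK l).sub_mem (hWB2 l r hr) (hWC1 l r hr))
  rwa [show (2⁻¹:ℝ) • (wB2 l r - wC1 l r) = Qm l r by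
    simp only [wB2, wC1, Qm]; module] at h

lemma hPf (r : ℤ) (hr : r ∈ Icc (0:ℤ) l) : Pf l r ∈ KK l := by
  have h := (KK l).smul_mem (2⁻¹ : ℝ) ((KK l).add_mem (hWC2 l r hr) (hWB1 l r hr))
  rwa [show (2⁻¹:ℝ) • (wC2 l r + wB1 l r) = Pf l r by
    simp only [wC2, wB1, Pf]; module] at h

lemma hQf (r : ℤ) (hr : r ∈ Icc (0:ℤ) l) : Qf l r ∈ KK l := by
  have h := (KK l).smul_mem (2⁻¹ : ℝ) ((KK l).sub_mem (hWC2 l r hr) (hWB1 l r hr))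
  rwa [show (2⁻¹:ℝ) • (wC2 l r - wB1 l r) = Qf l r by
    simp only [wC2, wB1, Qf]; module] at h

noncomputable def gP (r : ℤ) : ℤ × ℤ → ℝ := fun x =>
  (if x = pa l r then qc l (-r)^2 else 0) - (if x = pb l (r+1) then qc l (-r)^2 else 0)
  + ((if x = pa l (-r-1) then qc l (r+1)^2 else 0) - (if x = pb l (-r) then qc l (r+1)^2 else 0))

noncomputable def gQ (r : ℤ) : ℤ × ℤ → ℝ := fun x =>
  (if x = pa l (r+1) then qc l (r+1)^2 else 0) - (if x = pb l r then qc l (r+1)^2 else 0)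
  + ((if x = pa l (-r) then qc l (-r)^2 else 0) - (if x = pb l (-r-1) then qc l (-r)^2 else 0))

lemma lie_Fm_Em_same {a b : ℤ × ℤ} (ha : a ∈ Jset l) (hb : b ∈ Jset l) (hab : a ≠ b) :
    ⁅Fm l a b, Em l a b⁆ = (-2 : ℝ) • Dm l a b := by
  rw [← lie_skew, lie_Em_Fm_same l ha hb hab]
  module

lemma gP_eq (r : ℤ) : diagM l (gP l r)
    = qc l (-r)^2 • Dm l (pa l r) (pb l (r+1))
      + qc l (r+1)^2 • Dm l (pa l (-r-1)) (pb l (-r)) :=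
  diagM_pair l _ _ _ _ _ _ (pa_ne_pb l _ _) (by simp only [ne_eq, pa_eq_pa]; omega)
    (pa_ne_pb l _ _) (pb_ne_pa l _ _) (by simp only [ne_eq, pb_eq_pb]; omega) (pa_ne_pb l _ _)

lemma gQ_eq (r : ℤ) : diagM l (gQ l r)
    = qc l (r+1)^2 • Dm l (pa l (r+1)) (pb l r)
      + qc l (-r)^2 • Dm l (pa l (-r)) (pb l (-r-1)) :=
  diagM_pair l _ _ _ _ _ _ (pa_ne_pb l _ _) (by simp only [ne_eq, pa_eq_pa]; omega)
    (pa_ne_pb l _ _) (pb_ne_pa l _ _) (by simp only [ne_eq, pb_eq_pb]; omega) (pa_ne_pb l _ _)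

lemma hDP (r : ℤ) (hr : r ∈ Icc (0:ℤ) l) : diagM l (gP l r) ∈ KK l := by
  simp only [Finset.mem_Icc] at hr
  apply smul_flip l (show (-2:ℝ) ≠ 0 by norm_num) (x := ⁅Pf l r, Pm l r⁆)
  · have hz13 : ⁅Fm l (pa l r) (pb l (r+1)), Em l (pa l (-r-1)) (pb l (-r))⁆ = 0 :=
      lie_Fm_Em_zero l (by simp only [ne_eq, pa_eq_pa]; omega) (pa_ne_pb l _ _)
        (pb_ne_pa l _ _) (by simp only [ne_eq, pb_eq_pb]; omega)
    have hz31 : ⁅Fm l (pa l (-r-1)) (pb l (-r)), Em l (pa l r) (pb l (r+1))⁆ = 0 :=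
      lie_Fm_Em_zero l (by simp only [ne_eq, pa_eq_pa]; omega) (pa_ne_pb l _ _)
        (pb_ne_pa l _ _) (by simp only [ne_eq, pb_eq_pb]; omega)
    have hm1 : ⁅Fm l (pa l r) (pb l (r+1)), Em l (pa l r) (pb l (r+1))⁆
        = (-2 : ℝ) • Dm l (pa l r) (pb l (r+1)) :=
      lie_Fm_Em_same l (pa_mem l (by omega) (by omega)) (pb_mem l (by omega) (by omega))
        (pa_ne_pb l _ _)
    have hm3 : qc l (r+1) • (qc l (r+1) • ⁅Fm l (pa l (-r-1)) (pb l (-r)),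
        Em l (pa l (-r-1)) (pb l (-r))⁆)
        = qc l (r+1)^2 • ((-2 : ℝ) • Dm l (pa l (-r-1)) (pb l (-r))) := by
      by_cases hrl : r = (l:ℤ)
      · subst hrl
        rw [qc_top]
        simp
      · rw [lie_Fm_Em_same l (pa_mem l (by omega) (by omega)) (pb_mem l (by omega) (by omega))
          (pa_ne_pb l _ _), smul_smul, sq]
    rw [gP_eq]
    simp only [Pf, Pm, lie_add, add_lie, lie_smul, smul_lie, hz13, hz31, smul_zero,
      add_zero, zero_add, hm1, hm3]
    module
  · exact (KK l).lie_mem (hPf l r (by simp only [Finset.mem_Icc]; omega))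
      (hPm l r (by simp only [Finset.mem_Icc]; omega))

lemma hDQ (r : ℤ) (hr : r ∈ Icc (0:ℤ) l) : diagM l (gQ l r) ∈ KK l := by
  simp only [Finset.mem_Icc] at hr
  apply smul_flip l (show (-2:ℝ) ≠ 0 by norm_num) (x := ⁅Qf l r, Qm l r⁆)
  · have hz13 : ⁅Fm l (pa l (r+1)) (pb l r), Em l (pa l (-r)) (pb l (-r-1))⁆ = 0 :=
      lie_Fm_Em_zero l (by simp only [ne_eq, pa_eq_pa]; omega) (pa_ne_pb l _ _)
        (pb_ne_pa l _ _) (by simp only [ne_eq, pb_eq_pb]; omega)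
    have hz31 : ⁅Fm l (pa l (-r)) (pb l (-r-1)), Em l (pa l (r+1)) (pb l r)⁆ = 0 :=
      lie_Fm_Em_zero l (by simp only [ne_eq, pa_eq_pa]; omega) (pa_ne_pb l _ _)
        (pb_ne_pa l _ _) (by simp only [ne_eq, pb_eq_pb]; omega)
    have hm4 : ⁅Fm l (pa l (-r)) (pb l (-r-1)), Em l (pa l (-r)) (pb l (-r-1))⁆
        = (-2 : ℝ) • Dm l (pa l (-r)) (pb l (-r-1)) :=
      lie_Fm_Em_same l (pa_mem l (by omega) (by omega)) (pb_mem l (by omega) (by omega))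
        (pa_ne_pb l _ _)
    have hm2 : qc l (r+1) • (qc l (r+1) • ⁅Fm l (pa l (r+1)) (pb l r),
        Em l (pa l (r+1)) (pb l r)⁆)
        = qc l (r+1)^2 • ((-2 : ℝ) • Dm l (pa l (r+1)) (pb l r)) := by
      by_cases hrl : r = (l:ℤ)
      · subst hrl
        rw [qc_top]
        simp
      · rw [lie_Fm_Em_same l (pa_mem l (by omega) (by omega)) (pb_mem l (by omega) (by omega))
          (pa_ne_pb l _ _), smul_smul, sq]
    rw [gQ_eq]
    simp only [Qf, Qm, lie_add, add_lie, lie_smul, smul_lie, hz13, hz31, smul_zero,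
      add_zero, zero_add, hm4, hm2]
    module
  · exact (KK l).lie_mem (hQf l r (by simp only [Finset.mem_Icc]; omega))
      (hQm l r (by simp only [Finset.mem_Icc]; omega))

-- evaluations of gP / gQ
lemma gP_v1 (r : ℤ) : gP l r (pa l r) = qc l (-r)^2 := by
  simp [gP, (show ¬(r = -r-1) by omega)]
lemma gP_v2 (r : ℤ) : gP l r (pb l (r+1)) = -(qc l (-r)^2) := by
  simp [gP, (show ¬(r+1 = -r) by omega)]
lemma gP_v3 (r : ℤ) : gP l r (pa l (-r-1)) = qc l (r+1)^2 := by
  simp [gP, (show ¬(-r-1 = r) by omega)]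
lemma gP_v4 (r : ℤ) : gP l r (pb l (-r)) = -(qc l (r+1)^2) := by
  simp [gP, (show ¬(-r = r+1) by omega)]
lemma gP_v5 {r : ℤ} (h1 : 1 ≤ r) : gP l r (pa l (-r)) = 0 := by
  simp [gP, (show ¬(-r = r) by omega), (show ¬(-r = -r-1) by omega)]
lemma gP_v6 {r : ℤ} (h1 : 1 ≤ r) : gP l r (pb l r) = 0 := by
  simp [gP, (show ¬(r = r+1) by omega), (show ¬(r = -r) by omega)]
lemma gP_v7 {r : ℤ} (h1 : 1 ≤ r) : gP l r (pa l r) = qc l (-r)^2 := gP_v1 l r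
lemma gP_v8 {r : ℤ} (h1 : 1 ≤ r) : gP l r (pb l (-r)) = -(qc l (r+1)^2) := gP_v4 l r

lemma gQ_v1 (r : ℤ) : gQ l r (pa l (r+1)) = qc l (r+1)^2 := by
  simp [gQ, (show ¬(r+1 = -r) by omega)]
lemma gQ_v2 (r : ℤ) : gQ l r (pb l r) = -(qc l (r+1)^2) := by
  simp [gQ, (show ¬(r = -r-1) by omega)]
lemma gQ_v3 (r : ℤ) : gQ l r (pa l (-r)) = qc l (-r)^2 := by
  simp [gQ, (show ¬(-r = r+1) by omega)]
lemma gQ_v4 (r : ℤ) : gQ l r (pb l (-r-1)) = -(qc l (-r)^2) := by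
  simp [gQ, (show ¬(-r-1 = r) by omega)]

lemma nsq_ne' {x y : ℝ} (hx : 0 ≤ x) (hy : 0 ≤ y) (h : x ≠ y) : -x^2 ≠ -y^2 := by
  intro hc
  rcases lt_trichotomy x y with hlt | heq | hgt
  · nlinarith [mul_self_lt_mul_self hx hlt]
  · exact h heq
  · nlinarith [mul_self_lt_mul_self hy hgt]

lemma nsq_ne {x y : ℝ} (hx : 0 ≤ x) (hy : 0 ≤ y) (h : x ≠ y) : -(2*x)^2 ≠ -(2*y)^2 := by
  have := nsq_ne' (by linarith) (by linarith) (show 2*x ≠ 2*y by intro hc; exact h (by linarith))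
  exact this

end Aux
namespace Aux
open Finset
variable (l : ℕ)

lemma qc_nonneg (m : ℤ) : 0 ≤ qc l m := Real.sqrt_nonneg _

lemma hE1 {r : ℤ} (h0 : 0 ≤ r) (hl : r ≤ l) : Em l (pa l r) (pb l (r+1)) ∈ KK l := by
  have hr : r ∈ Icc (0:ℤ) l := Finset.mem_Icc.mpr ⟨h0, hl⟩
  have hsp := extract_two l (KK l) (diagM l (gP l r)) (hDP l r hr)
    (qc l (-r) • Em l (pa l r) (pb l (r+1)))
    (qc l (r+1) • Em l (pa l (-r-1)) (pb l (-r)))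
    (-(2 * qc l (-r)^2)^2) (-(2 * qc l (r+1)^2)^2)
    (by rw [lie_smul, lie_smul, diagM_ad2_Em, gP_v1, gP_v2, smul_smul, smul_smul]
        congr 1; ring)
    (by rw [lie_smul, lie_smul, diagM_ad2_Em, gP_v3, gP_v4, smul_smul, smul_smul]
        congr 1; ring)
    (nsq_ne (sq_nonneg _) (sq_nonneg _) (qcsq_ne l h0 hl))
    (hPm l r hr)
  exact smul_mem_cancel l (qc_pos l (show (-r:ℤ) ≤ l by omega)).ne' hsp.1

lemma hE3 {r : ℤ} (h0 : 0 ≤ r) (hl : r ≤ (l:ℤ) - 1) :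
    Em l (pa l (-r-1)) (pb l (-r)) ∈ KK l := by
  have hr : r ∈ Icc (0:ℤ) l := Finset.mem_Icc.mpr ⟨h0, by omega⟩
  have hsp := extract_two l (KK l) (diagM l (gP l r)) (hDP l r hr)
    (qc l (-r) • Em l (pa l r) (pb l (r+1)))
    (qc l (r+1) • Em l (pa l (-r-1)) (pb l (-r)))
    (-(2 * qc l (-r)^2)^2) (-(2 * qc l (r+1)^2)^2)
    (by rw [lie_smul, lie_smul, diagM_ad2_Em, gP_v1, gP_v2, smul_smul, smul_smul]
        congr 1; ring)
    (by rw [lie_smul, lie_smul, diagM_ad2_Em, gP_v3, gP_v4, smul_smul, smul_smul]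
        congr 1; ring)
    (nsq_ne (sq_nonneg _) (sq_nonneg _) (qcsq_ne l h0 (by omega)))
    (hPm l r hr)
  exact smul_mem_cancel l (qc_pos l (show (r+1:ℤ) ≤ l by omega)).ne' hsp.2

lemma hE2 {r : ℤ} (h0 : 0 ≤ r) (hl : r ≤ (l:ℤ) - 1) :
    Em l (pa l (r+1)) (pb l r) ∈ KK l := by
  have hr : r ∈ Icc (0:ℤ) l := Finset.mem_Icc.mpr ⟨h0, by omega⟩
  have hsp := extract_two l (KK l) (diagM l (gQ l r)) (hDQ l r hr)
    (qc l (r+1) • Em l (pa l (r+1)) (pb l r))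
    (qc l (-r) • Em l (pa l (-r)) (pb l (-r-1)))
    (-(2 * qc l (r+1)^2)^2) (-(2 * qc l (-r)^2)^2)
    (by rw [lie_smul, lie_smul, diagM_ad2_Em, gQ_v1, gQ_v2, smul_smul, smul_smul]
        congr 1; ring)
    (by rw [lie_smul, lie_smul, diagM_ad2_Em, gQ_v3, gQ_v4, smul_smul, smul_smul]
        congr 1; ring)
    (Ne.symm (nsq_ne (sq_nonneg _) (sq_nonneg _) (qcsq_ne l h0 (by omega))))
    (hQm l r hr)
  exact smul_mem_cancel l (qc_pos l (show (r+1:ℤ) ≤ l by omega)).ne' hsp.1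

lemma hE4 {r : ℤ} (h0 : 0 ≤ r) (hl : r ≤ (l:ℤ)) :
    Em l (pa l (-r)) (pb l (-r-1)) ∈ KK l := by
  have hr : r ∈ Icc (0:ℤ) l := Finset.mem_Icc.mpr ⟨h0, hl⟩
  have hsp := extract_two l (KK l) (diagM l (gQ l r)) (hDQ l r hr)
    (qc l (r+1) • Em l (pa l (r+1)) (pb l r))
    (qc l (-r) • Em l (pa l (-r)) (pb l (-r-1)))
    (-(2 * qc l (r+1)^2)^2) (-(2 * qc l (-r)^2)^2)
    (by rw [lie_smul, lie_smul, diagM_ad2_Em, gQ_v1, gQ_v2, smul_smul, smul_smul]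
        congr 1; ring)
    (by rw [lie_smul, lie_smul, diagM_ad2_Em, gQ_v3, gQ_v4, smul_smul, smul_smul]
        congr 1; ring)
    (Ne.symm (nsq_ne (sq_nonneg _) (sq_nonneg _) (qcsq_ne l h0 hl)))
    (hQm l r hr)
  exact smul_mem_cancel l (qc_pos l (show (-r:ℤ) ≤ l by omega)).ne' hsp.2

lemma hFr {r : ℤ} (h1 : 1 ≤ r) (h2 : r ≤ l) :
    Fm l (pa l r) (pb l r) ∈ KK l ∧ Fm l (pa l (-r)) (pb l (-r)) ∈ KK l := by
  have hr : r ∈ Icc (0:ℤ) l := Finset.mem_Icc.mpr ⟨by omega, h2⟩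
  have hsp := extract_two l (KK l) (diagM l (gP l r)) (hDP l r hr)
    (pc l r • Fm l (pa l r) (pb l r))
    (pc l (-r) • Fm l (pa l (-r)) (pb l (-r)))
    (-(qc l (-r)^2)^2) (-(qc l (r+1)^2)^2)
    (by rw [lie_smul, lie_smul, diagM_ad2_Fm, gP_v1, gP_v6 l h1, smul_smul, smul_smul]
        congr 1; ring)
    (by rw [lie_smul, lie_smul, diagM_ad2_Fm, gP_v5 l h1, gP_v4, smul_smul, smul_smul]
        congr 1; ring)
    (nsq_ne' (sq_nonneg _) (sq_nonneg _) (qcsq_ne l (by omega) h2))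
    (hG l r (Finset.mem_Icc.mpr ⟨h1, h2⟩))
  exact ⟨smul_mem_cancel l (pc_ne_zero l (by omega) (by omega)) hsp.1,
    smul_mem_cancel l (pc_ne_zero l (by omega) (by omega)) hsp.2⟩

lemma hFall {k : ℤ} (h1 : -(l:ℤ) ≤ k) (h2 : k ≤ l) : Fm l (pa l k) (pb l k) ∈ KK l := by
  rcases lt_trichotomy k 0 with h | h | h
  · have := (hFr l (r := -k) (by omega) (by omega)).2
    rwa [show -(-k) = k by ring] at this
  · subst h
    exact hF00 l
  · exact (hFr l (r := k) (by omega) h2).1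

lemma hEm0 {k : ℤ} (h1 : -(l:ℤ) ≤ k) (h2 : k ≤ l) : Em l (pa l k) (pb l k) ∈ KK l := by
  apply smul_flip l (neg_ne_zero.mpr (hmu l)) (x := ⁅Am l, Fm l (pa l k) (pb l k)⁆)
  · exact (Am_lie_Fm l k k).symm ▸ rfl
  · exact (KK l).lie_mem (hAm l) (hFall l h1 h2)

end Aux


/-- The real Lie algebra `L` generated by `A, B₁, B₂, B₃` contains the elementary
matrices `E_{(ℓ,k),(ℓ+1,k+j)}` for every `k = -ℓ, …, ℓ` and every `j ∈ {-1, 0, 1}`. -/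
theorem elementary_matrices_mem (l : ℕ) (k j : ℤ)
    (hk : -(l : ℤ) ≤ k ∧ k ≤ (l : ℤ)) (hj : j = -1 ∨ j = 0 ∨ j = 1) :
    Em l ((l : ℤ), k) ((l : ℤ) + 1, k + j) ∈
      LieSubalgebra.lieSpan ℝ (Mat l) {Am l, B1 l, B2 l, B3 l} := by

  obtain ⟨hk1, hk2⟩ := hk
  show Em l (Aux.pa l k) (Aux.pb l (k + j)) ∈ Aux.KK l
  rcases hj with rfl | rfl | rfl
  · by_cases hk0 : k ≤ 0
    · have h := Aux.hE4 l (r := -k) (by omega) (by omega)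
      rwa [show -(-k) = k by ring, show k-1 = k + (-1) by ring] at h
    · have h := Aux.hE2 l (r := k-1) (by omega) (by omega)
      rwa [show k-1+1 = k by ring, show k-1 = k + (-1) by ring] at h
  · rw [show k + 0 = k by ring]
    exact Aux.hEm0 l hk1 hk2
  · by_cases hk0 : 0 ≤ k
    · have h := Aux.hE1 l (r := k) hk0 hk2
      rwa [show k+1 = k + 1 by ring] at h
    · have h := Aux.hE3 l (r := -k-1) (by omega) (by omega)
      rwa [show -(-k-1)-1 = k by ring, show -(-k-1) = k+1 by ring] at h
end

section
/- For every j ∈ {0, 1, …, ℓ}, the matrix E_{(ℓ,−j),(ℓ+1,−j)} + E_{(ℓ,j),(ℓ+1,j)} belongs to the real Lie algebra L generated by A, B₁, B₂, B₃. -/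
open Matrix

attribute [local instance] LieRing.ofAssociativeRing

lemma mem_Jset (l : ℕ) (x : ℤ × ℤ) :
    x ∈ Jset l ↔ (x.1 = (l:ℤ) ∨ x.1 = (l:ℤ) + 1) ∧ -x.1 ≤ x.2 ∧ x.2 ≤ x.1 := by
  simp only [Jset, Finset.mem_filter, Finset.mem_product, Finset.mem_insert,
    Finset.mem_singleton, Finset.mem_Icc]
  constructor
  · rintro ⟨⟨h1, h2⟩, h3⟩; exact ⟨h1, h3⟩
  · rintro ⟨h1, h2, h3⟩
    refine ⟨⟨h1, ?_, ?_⟩, h2, h3⟩ <;> rcases h1 with h | h <;> omega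

lemma eM_mul_eM (l : ℕ) (a b c d : ℤ × ℤ) :
    eM l a b * eM l c d = if b = c ∧ b ∈ Jset l then eM l a d else 0 := by
  ext x y
  rw [Matrix.mul_apply]
  simp only [eM]
  split_ifs with h
  · obtain ⟨rfl, hb⟩ := h
    rw [Finset.sum_eq_single (⟨b, hb⟩ : Jset l)]
    · by_cases hx : (x : ℤ × ℤ) = a <;> by_cases hy : (y : ℤ × ℤ) = d <;> simp [eM, hx, hy]
    · intro z _ hz
      have : (z : ℤ × ℤ) ≠ b := fun h => hz (Subtype.ext h)
      simp [this]
    · intro h; exact absurd (Finset.mem_univ _) h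
  · rw [Matrix.zero_apply]
    apply Finset.sum_eq_zero
    intro z _
    by_cases hz : (z : ℤ × ℤ) = b
    · have : ¬ ((z : ℤ × ℤ) = c ∧ (y : ℤ × ℤ) = d) := by
        intro hc
        exact h ⟨hz ▸ hc.1, hz ▸ z.2⟩
      simp [this]
    · simp [hz]

lemma mem_Jset_a (l : ℕ) {m : ℤ} (h1 : -(l:ℤ) ≤ m) (h2 : m ≤ l) :
    ((l:ℤ), m) ∈ Jset l := by
  rw [mem_Jset]; exact ⟨Or.inl rfl, h1, h2⟩

lemma mem_Jset_b (l : ℕ) {m : ℤ} (h1 : -(l:ℤ)-1 ≤ m) (h2 : m ≤ (l:ℤ)+1) :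
    ((l:ℤ)+1, m) ∈ Jset l := by
  rw [mem_Jset]; refine ⟨Or.inr rfl, by omega, by omega⟩

/-- diagonal coefficient of `Am` -/
noncomputable def alph (l : ℕ) (x : ℤ × ℤ) : ℂ :=
  if x.1 = (l:ℤ) then Complex.I * (2*(l:ℂ)+3)/2 else -(Complex.I * (2*(l:ℂ)+1)/2)

lemma Am_mul_eM (l : ℕ) (a c : ℤ × ℤ) (ha : a ∈ Jset l) :
    Am l * eM l a c = alph l a • eM l a c := by
  obtain ⟨a1, a2⟩ := a
  obtain ⟨h1, h2, h3⟩ := (mem_Jset l (a1, a2)).mp ha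
  simp only at h1 h2 h3
  rw [Am, add_mul, Finset.sum_mul, Finset.sum_mul]
  rcases h1 with h | h <;> subst h
  · rw [Finset.sum_eq_single_of_mem a2 (Finset.mem_Icc.mpr ⟨by omega, by omega⟩)]
    · rw [Finset.sum_eq_zero, add_zero, smul_mul_assoc, eM_mul_eM]
      · simp [ha, alph]
      · intro k _
        rw [smul_mul_assoc, eM_mul_eM]
        have : ¬ ((l:ℤ)+1, k) = ((l:ℤ), a2) := by simp
        simp [this]
    · intro k _ hk
      rw [smul_mul_assoc, eM_mul_eM]
      have : ¬ ((l:ℤ), k) = ((l:ℤ), a2) := by simp [hk]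
      simp [this]
  · rw [Finset.sum_eq_zero, zero_add,
      Finset.sum_eq_single_of_mem a2 (Finset.mem_Icc.mpr ⟨by omega, by omega⟩)]
    · rw [smul_mul_assoc, eM_mul_eM]
      simp [ha, alph]
    · intro k _ hk
      rw [smul_mul_assoc, eM_mul_eM]
      have : ¬ ((l:ℤ)+1, k) = ((l:ℤ)+1, a2) := by simp [hk]
      simp [this]
    · intro k _
      rw [smul_mul_assoc, eM_mul_eM]
      have : ¬ ((l:ℤ), k) = ((l:ℤ)+1, a2) := by simp
      simp [this]

lemma eM_mul_Am (l : ℕ) (a c : ℤ × ℤ) (hc : c ∈ Jset l) :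
    eM l a c * Am l = alph l c • eM l a c := by
  obtain ⟨c1, c2⟩ := c
  obtain ⟨h1, h2, h3⟩ := (mem_Jset l (c1, c2)).mp hc
  simp only at h1 h2 h3
  rw [Am, mul_add, Finset.mul_sum, Finset.mul_sum]
  rcases h1 with h | h <;> subst h
  · rw [Finset.sum_eq_single_of_mem c2 (Finset.mem_Icc.mpr ⟨by omega, by omega⟩)]
    · rw [Finset.sum_eq_zero, add_zero, mul_smul_comm, eM_mul_eM]
      · simp [hc, alph]
      · intro k _
        rw [mul_smul_comm, eM_mul_eM]
        have : ¬ ((l:ℤ), c2) = ((l:ℤ)+1, k) := by simp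
        simp [this]
    · intro k _ hk
      rw [mul_smul_comm, eM_mul_eM]
      have : ¬ ((l:ℤ), c2) = ((l:ℤ), k) := by simp [Ne.symm hk]
      simp [this]
  · rw [Finset.sum_eq_zero, zero_add,
      Finset.sum_eq_single_of_mem c2 (Finset.mem_Icc.mpr ⟨by omega, by omega⟩)]
    · rw [mul_smul_comm, eM_mul_eM]
      simp [hc, alph]
    · intro k _ hk
      rw [mul_smul_comm, eM_mul_eM]
      have : ¬ ((l:ℤ)+1, c2) = ((l:ℤ)+1, k) := by simp [Ne.symm hk]
      simp [this]
    · intro k _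
      rw [mul_smul_comm, eM_mul_eM]
      have : ¬ ((l:ℤ)+1, c2) = ((l:ℤ), k) := by simp
      simp [this]

/-- abbreviations for the aligned matrices -/
def Fv (l : ℕ) (m : ℤ) : Mat l := Fm l ((l:ℤ), m) ((l:ℤ)+1, m)
def Ev (l : ℕ) (m : ℤ) : Mat l := Em l ((l:ℤ), m) ((l:ℤ)+1, m)
def Dv (l : ℕ) (m : ℤ) : Mat l := Dm l ((l:ℤ), m) ((l:ℤ)+1, m)

lemma lie_A_Fv (l : ℕ) (m : ℤ) (h1 : -(l:ℤ) ≤ m) (h2 : m ≤ l) :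
    ⁅Am l, Fv l m⁆ = (-(2*(l:ℂ)+2)) • Ev l m := by
  have ha : ((l:ℤ), m) ∈ Jset l := mem_Jset_a l h1 h2
  have hb : ((l:ℤ)+1, m) ∈ Jset l := mem_Jset_b l (by omega) (by omega)
  have hne : ¬ ((l:ℤ)+1 = (l:ℤ)) := by omega
  simp only [Fv, Ev, Fm, Em, Ring.lie_def, mul_add, add_mul, mul_smul_comm,
    smul_mul_assoc, Am_mul_eM l _ _ ha, Am_mul_eM l _ _ hb,
    eM_mul_Am l _ _ ha, eM_mul_Am l _ _ hb, alph, hne, if_true, if_false,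
    if_pos rfl, ite_false, ite_true, smul_smul]
  match_scalars <;> (ring_nf; try simp [Complex.I_sq]; try ring)

lemma lie_Fv_Ev (l : ℕ) (m m' : ℤ) (h1 : -(l:ℤ) ≤ m) (h2 : m ≤ l) :
    ⁅Fv l m, Ev l m'⁆ = if m = m' then (-2 : ℂ) • Dv l m else 0 := by
  have ha : ((l:ℤ), m) ∈ Jset l := mem_Jset_a l h1 h2
  have hb : ((l:ℤ)+1, m) ∈ Jset l := mem_Jset_b l (by omega) (by omega)
  by_cases h : m = m'
  · subst h
    simp only [Fv, Ev, Dv, Fm, Em, Dm, Ring.lie_def, mul_sub, sub_mul, add_mul, mul_add,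
      mul_smul_comm, smul_mul_assoc, eM_mul_eM]
    simp only [if_pos rfl, ha, hb, Prod.mk.injEq, and_self, and_true, if_true]
    simp
    match_scalars <;> (ring_nf; try simp [Complex.I_sq]; try ring)
  · rw [if_neg h]
    simp only [Fv, Ev, Fm, Em, Ring.lie_def, mul_sub, sub_mul, add_mul, mul_add,
      mul_smul_comm, smul_mul_assoc, eM_mul_eM]
    simp [h, Ne.symm h]

lemma lie_Dv_Fv (l : ℕ) (m m' : ℤ) (h1 : -(l:ℤ) ≤ m) (h2 : m ≤ l) :
    ⁅Dv l m', Fv l m⁆ = if m' = m then (-2 : ℂ) • Ev l m else 0 := by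
  have ha : ((l:ℤ), m) ∈ Jset l := mem_Jset_a l h1 h2
  have hb : ((l:ℤ)+1, m) ∈ Jset l := mem_Jset_b l (by omega) (by omega)
  by_cases h : m' = m
  · subst h
    simp only [Fv, Ev, Dv, Fm, Em, Dm, Ring.lie_def, mul_sub, sub_mul, add_mul, mul_add,
      mul_smul_comm, smul_mul_assoc, eM_mul_eM]
    simp only [if_pos rfl, ha, hb, Prod.mk.injEq, and_self, and_true, if_true]
    simp
    match_scalars <;> (ring_nf; try simp [Complex.I_sq]; try ring)
  · rw [if_neg h]
    simp only [Fv, Ev, Dv, Fm, Em, Dm, Ring.lie_def, mul_sub, sub_mul, add_mul, mul_add,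
      mul_smul_comm, smul_mul_assoc, eM_mul_eM]
    simp [h, Ne.symm h]

lemma lie_Dv_Ev (l : ℕ) (m m' : ℤ) (h1 : -(l:ℤ) ≤ m) (h2 : m ≤ l) :
    ⁅Dv l m', Ev l m⁆ = if m' = m then (2 : ℂ) • Fv l m else 0 := by
  have ha : ((l:ℤ), m) ∈ Jset l := mem_Jset_a l h1 h2
  have hb : ((l:ℤ)+1, m) ∈ Jset l := mem_Jset_b l (by omega) (by omega)
  by_cases h : m' = m
  · subst h
    simp only [Fv, Ev, Dv, Fm, Em, Dm, Ring.lie_def, mul_sub, sub_mul, add_mul, mul_add,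
      mul_smul_comm, smul_mul_assoc, eM_mul_eM]
    simp only [if_pos rfl, ha, hb, Prod.mk.injEq, and_self, and_true, if_true]
    simp
    match_scalars <;> (ring_nf; try simp [Complex.I_sq]; try ring)
  · rw [if_neg h]
    simp only [Fv, Ev, Dv, Fm, Em, Dm, Ring.lie_def, mul_sub, sub_mul, add_mul, mul_add,
      mul_smul_comm, smul_mul_assoc, eM_mul_eM]
    simp [h, Ne.symm h]

/-- real scalar via complex scalar -/
lemma real_smul_mat (l : ℕ) (r : ℝ) (X : Mat l) : ((r : ℂ)) • X = r • X := by
  rw [show ((r : ℂ)) = algebraMap ℝ ℂ r from rfl, algebraMap_smul]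

lemma lie_sum_right {ι : Type*} (l : ℕ) (x : Mat l) (s : Finset ι) (f : ι → Mat l) :
    ⁅x, ∑ i ∈ s, f i⁆ = ∑ i ∈ s, ⁅x, f i⁆ := by
  simp only [Ring.lie_def, Finset.mul_sum, Finset.sum_mul, ← Finset.sum_sub_distrib]

lemma lie_sum_left {ι : Type*} (l : ℕ) (x : Mat l) (s : Finset ι) (f : ι → Mat l) :
    ⁅∑ i ∈ s, f i, x⁆ = ∑ i ∈ s, ⁅f i, x⁆ := by
  simp only [Ring.lie_def, Finset.mul_sum, Finset.sum_mul, ← Finset.sum_sub_distrib]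

noncomputable def FF (l : ℕ) (c : ℤ → ℝ) : Mat l :=
  ∑ m ∈ Finset.Icc (-(l:ℤ)) (l:ℤ), c m • Fv l m
noncomputable def EE (l : ℕ) (c : ℤ → ℝ) : Mat l :=
  ∑ m ∈ Finset.Icc (-(l:ℤ)) (l:ℤ), c m • Ev l m
noncomputable def DD (l : ℕ) (c : ℤ → ℝ) : Mat l :=
  ∑ m ∈ Finset.Icc (-(l:ℤ)) (l:ℤ), c m • Dv l m

lemma B3_eq_FF (l : ℕ) : B3 l = FF l (pc l) := rfl

lemma lie_A_FF (l : ℕ) (c : ℤ → ℝ) :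
    ⁅Am l, FF l c⁆ = (-(2*(l:ℝ)+2)) • EE l c := by
  rw [FF, lie_sum_right, EE, Finset.smul_sum]
  apply Finset.sum_congr rfl
  intro m hm
  rw [Finset.mem_Icc] at hm
  rw [lie_smul, lie_A_Fv l m hm.1 hm.2,
    show (-(2*(l:ℂ)+2)) = (((-(2*(l:ℝ)+2)) : ℝ) : ℂ) by push_cast; ring,
    real_smul_mat, smul_comm]

lemma lie_FF_EE (l : ℕ) (c d : ℤ → ℝ) :
    ⁅FF l c, EE l d⁆ = DD l (fun m => (-2) * c m * d m) := by
  rw [FF, EE, DD, lie_sum_left]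
  apply Finset.sum_congr rfl
  intro m hm
  rw [Finset.mem_Icc] at hm
  rw [lie_sum_right, Finset.sum_eq_single_of_mem m (Finset.mem_Icc.mpr hm)]
  · rw [smul_lie, lie_smul, lie_Fv_Ev l m m hm.1 hm.2, if_pos rfl,
      show ((-2 : ℂ)) = (((-2 : ℝ)) : ℂ) by norm_num, real_smul_mat]
    rw [smul_comm (d m), smul_smul, smul_smul]
    congr 1
    ring
  · intro m' _ hne
    rw [smul_lie, lie_smul, lie_Fv_Ev l m m' hm.1 hm.2, if_neg (Ne.symm hne), smul_zero,
      smul_zero]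

lemma lie_DD_FF (l : ℕ) (c d : ℤ → ℝ) :
    ⁅DD l c, FF l d⁆ = EE l (fun m => (-2) * c m * d m) := by
  rw [FF, DD, EE, lie_sum_left]
  apply Finset.sum_congr rfl
  intro i hi
  rw [Finset.mem_Icc] at hi
  rw [lie_sum_right, Finset.sum_eq_single_of_mem i (Finset.mem_Icc.mpr hi)]
  · rw [smul_lie, lie_smul, lie_Dv_Fv l i i hi.1 hi.2, if_pos rfl,
      show ((-2 : ℂ)) = (((-2 : ℝ)) : ℂ) by norm_num, real_smul_mat, smul_smul, smul_smul]
    congr 1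
    ring
  · intro m' hmem hne
    rw [Finset.mem_Icc] at hmem
    rw [smul_lie, lie_smul, lie_Dv_Fv l m' i hmem.1 hmem.2, if_neg (Ne.symm hne), smul_zero,
      smul_zero]

lemma lie_DD_EE (l : ℕ) (c d : ℤ → ℝ) :
    ⁅DD l c, EE l d⁆ = FF l (fun m => 2 * c m * d m) := by
  rw [EE, DD, FF, lie_sum_left]
  apply Finset.sum_congr rfl
  intro i hi
  rw [Finset.mem_Icc] at hi
  rw [lie_sum_right, Finset.sum_eq_single_of_mem i (Finset.mem_Icc.mpr hi)]
  · rw [smul_lie, lie_smul, lie_Dv_Ev l i i hi.1 hi.2, if_pos rfl,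
      show ((2 : ℂ)) = (((2 : ℝ)) : ℂ) by norm_num, real_smul_mat, smul_smul, smul_smul]
    congr 1
    ring
  · intro m' hmem hne
    rw [Finset.mem_Icc] at hmem
    rw [smul_lie, lie_smul, lie_Dv_Ev l m' i hmem.1 hmem.2, if_neg (Ne.symm hne), smul_zero,
      smul_zero]

/-- separation eigenvalues -/
noncomputable def lam (l : ℕ) (m : ℤ) : ℝ := (-16) * pc l m ^ 4

lemma pc_even (l : ℕ) (m : ℤ) : pc l (-m) = pc l m := by
  simp [pc]

lemma lam_even (l : ℕ) (m : ℤ) : lam l (-m) = lam l m := by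
  simp [lam, pc_even]

lemma pc_sq (l : ℕ) (m : ℤ) (h1 : -(l:ℤ) ≤ m) (h2 : m ≤ l) :
    pc l m ^ 2 = (((l:ℝ)+1)^2 - (m:ℝ)^2) / ((2*(l:ℝ)+1)*(2*(l:ℝ)+3)) := by
  have hm1 : -((l:ℝ)) ≤ (m:ℝ) := by exact_mod_cast h1
  have hm2 : (m:ℝ) ≤ (l:ℝ) := by exact_mod_cast h2
  have hl : (0:ℝ) ≤ (l:ℝ) := Nat.cast_nonneg l
  have harg : (0:ℝ) ≤ (((l:ℝ)+1)^2 - (m:ℝ)^2) / ((2*(l:ℝ)+1)*(2*(l:ℝ)+3)) := by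
    apply div_nonneg
    · nlinarith
    · nlinarith
  rw [pc, neg_pow, Real.sq_sqrt harg]
  ring

lemma pc_neg' (l : ℕ) (m : ℤ) (h1 : -(l:ℤ) ≤ m) (h2 : m ≤ l) : pc l m < 0 := by
  have hm1 : -((l:ℝ)) ≤ (m:ℝ) := by exact_mod_cast h1
  have hm2 : (m:ℝ) ≤ (l:ℝ) := by exact_mod_cast h2
  have hl : (0:ℝ) ≤ (l:ℝ) := Nat.cast_nonneg l
  have harg : (0:ℝ) < (((l:ℝ)+1)^2 - (m:ℝ)^2) / ((2*(l:ℝ)+1)*(2*(l:ℝ)+3)) := by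
    apply div_pos
    · nlinarith
    · nlinarith
  have := Real.sqrt_pos.mpr harg
  rw [pc]
  linarith

lemma pc_ne (l : ℕ) (m : ℤ) (h1 : -(l:ℤ) ≤ m) (h2 : m ≤ l) : pc l m ≠ 0 :=
  ne_of_lt (pc_neg' l m h1 h2)

lemma lam_ne (l : ℕ) {i j : ℤ} (hi1 : 0 ≤ i) (hi2 : i ≤ l) (hj1 : 0 ≤ j) (hj2 : j ≤ l)
    (hne : i ≠ j) : lam l i ≠ lam l j := by
  have hsi := pc_sq l i (by omega) hi2
  have hsj := pc_sq l j (by omega) hj2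
  have hl : (0:ℝ) ≤ (l:ℝ) := Nat.cast_nonneg l
  have hi1' : (0:ℝ) ≤ (i:ℝ) := by exact_mod_cast hi1
  have hi2' : (i:ℝ) ≤ (l:ℝ) := by exact_mod_cast hi2
  have hj1' : (0:ℝ) ≤ (j:ℝ) := by exact_mod_cast hj1
  have hj2' : (j:ℝ) ≤ (l:ℝ) := by exact_mod_cast hj2
  have hden : (0:ℝ) < (2*(l:ℝ)+1)*(2*(l:ℝ)+3) := by nlinarith
  have hxi : 0 < pc l i ^ 2 := by rw [hsi]; apply div_pos; nlinarith; exact hden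
  have hxj : 0 < pc l j ^ 2 := by rw [hsj]; apply div_pos; nlinarith; exact hden
  intro h
  rw [lam, lam] at h
  have h4 : pc l i ^ 4 = pc l j ^ 4 := by linarith
  have hfac : (pc l i ^ 2 - pc l j ^ 2) * (pc l i ^ 2 + pc l j ^ 2) = 0 := by
    linear_combination h4
  rcases mul_eq_zero.mp hfac with h0 | h0
  · have hx : pc l i ^ 2 = pc l j ^ 2 := by linarith
    rw [hsi, hsj, div_eq_div_iff (ne_of_gt hden) (ne_of_gt hden)] at hx
    have h2 : (i:ℝ)^2 = (j:ℝ)^2 := by nlinarith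
    have h2z : i^2 = j^2 := by exact_mod_cast h2
    have : (i - j) * (i + j) = 0 := by linear_combination h2z
    rcases mul_eq_zero.mp this with h | h <;> omega
  · linarith

lemma key_induction (l : ℕ) (t : Finset ℤ) :
    FF l (fun m => (∏ i ∈ t, (lam l m - lam l i)) * pc l m) ∈
      LieSubalgebra.lieSpan ℝ (Mat l) {Am l, B1 l, B2 l, B3 l} := by
  set L := LieSubalgebra.lieSpan ℝ (Mat l) {Am l, B1 l, B2 l, B3 l} with hL
  have hAm : Am l ∈ L := LieSubalgebra.subset_lieSpan (by simp)
  have hB3 : B3 l ∈ L := LieSubalgebra.subset_lieSpan (by simp)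
  have hlne : (-(2*(l:ℝ)+2)) ≠ 0 := by
    have : (0:ℝ) ≤ (l:ℝ) := Nat.cast_nonneg l
    intro h; nlinarith
  have hEE : EE l (pc l) ∈ L := by
    have heq : EE l (pc l) = (-(2*(l:ℝ)+2))⁻¹ • ⁅Am l, B3 l⁆ := by
      rw [B3_eq_FF, lie_A_FF, inv_smul_smul₀ hlne]
    rw [heq]
    exact L.smul_mem _ (L.lie_mem hAm hB3)
  set c0 : ℤ → ℝ := fun m => (-2) * pc l m * pc l m with hc0
  have hDD : DD l c0 ∈ L := by
    have heq : DD l c0 = ⁅B3 l, EE l (pc l)⁆ := by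
      rw [B3_eq_FF, lie_FF_EE]
    rw [heq]
    exact L.lie_mem hB3 hEE
  have step : ∀ c : ℤ → ℝ, FF l c ∈ L → FF l (fun m => lam l m * c m) ∈ L := by
    intro c hc
    have h1 : EE l (fun m => (-2) * c0 m * c m) ∈ L := by
      rw [← lie_DD_FF]; exact L.lie_mem hDD hc
    have h2 : FF l (fun m => 2 * c0 m * ((-2) * c0 m * c m)) ∈ L := by
      rw [← lie_DD_EE]; exact L.lie_mem hDD h1
    have hfun : (fun m => 2 * c0 m * ((-2) * c0 m * c m)) = fun m => lam l m * c m := by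
      funext m
      simp only [hc0, lam]
      ring
    rwa [hfun] at h2
  classical
  induction t using Finset.induction_on with
  | empty => simpa [B3_eq_FF] using hB3
  | @insert i t hi IH =>
    have h1 := step _ IH
    have h2 : FF l (fun m => (∏ i' ∈ insert i t, (lam l m - lam l i')) * pc l m)
        = FF l (fun m => lam l m * ((∏ i' ∈ t, (lam l m - lam l i')) * pc l m))
          + (- lam l i) • FF l (fun m => (∏ i' ∈ t, (lam l m - lam l i')) * pc l m) := by
      rw [FF, FF, FF, Finset.smul_sum, ← Finset.sum_add_distrib]
      apply Finset.sum_congr rfl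
      intro m _
      rw [Finset.prod_insert hi, smul_smul, ← add_smul]
      congr 1
      ring
    rw [h2]
    exact L.add_mem h1 (L.smul_mem _ IH)


/-- For every `j ∈ {0, 1, …, ℓ}`, the matrix `E_{(ℓ,-j),(ℓ+1,-j)} + E_{(ℓ,j),(ℓ+1,j)}`
belongs to the real Lie algebra generated by `A, B₁, B₂, B₃`. -/
theorem sum_elementary_mem (l : ℕ) (j : ℤ) (hj : 0 ≤ j ∧ j ≤ (l : ℤ)) :
    Em l ((l : ℤ), -j) ((l : ℤ) + 1, -j) + Em l ((l : ℤ), j) ((l : ℤ) + 1, j) ∈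
      LieSubalgebra.lieSpan ℝ (Mat l) {Am l, B1 l, B2 l, B3 l} := by
  classical
  obtain ⟨hj1, hj2⟩ := hj
  set L := LieSubalgebra.lieSpan ℝ (Mat l) {Am l, B1 l, B2 l, B3 l} with hL
  have hAm : Am l ∈ L := LieSubalgebra.subset_lieSpan (by simp)
  set t : Finset ℤ := (Finset.Icc (0:ℤ) (l:ℤ)).erase j with ht
  set ct : ℤ → ℝ := fun m => (∏ i ∈ t, (lam l m - lam l i)) * pc l m with hct
  have hFF : FF l ct ∈ L := key_induction l t
  -- the key coefficient is nonzero
  have hK : ct j ≠ 0 := by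
    apply mul_ne_zero
    · rw [Finset.prod_ne_zero_iff]
      intro i hi
      rw [ht, Finset.mem_erase, Finset.mem_Icc] at hi
      exact sub_ne_zero_of_ne (lam_ne l hj1 hj2 hi.2.1 hi.2.2 (Ne.symm hi.1))
    · exact pc_ne l j (by omega) hj2
  -- evenness
  have hcteven : ct (-j) = ct j := by
    simp only [hct, lam_even, pc_even]
  -- vanishing outside ±j
  have hvanish : ∀ m ∈ Finset.Icc (-(l:ℤ)) (l:ℤ), m ∉ ({-j, j} : Finset ℤ) → ct m = 0 := by
    intro m hm hnm
    rw [Finset.mem_Icc] at hm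
    simp only [Finset.mem_insert, Finset.mem_singleton] at hnm
    push_neg at hnm
    rw [hct]
    apply mul_eq_zero_of_left
    rcases le_or_gt 0 m with h | h
    · apply Finset.prod_eq_zero (i := m)
      · rw [ht, Finset.mem_erase, Finset.mem_Icc]
        exact ⟨hnm.2, h, hm.2⟩
      · ring
    · apply Finset.prod_eq_zero (i := -m)
      · rw [ht, Finset.mem_erase, Finset.mem_Icc]
        refine ⟨by omega, by omega, by omega⟩
      · rw [lam_even]
        ring
  have hsub : ({-j, j} : Finset ℤ) ⊆ Finset.Icc (-(l:ℤ)) (l:ℤ)  := by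
    intro x hx
    simp only [Finset.mem_insert, Finset.mem_singleton] at hx
    rw [Finset.mem_Icc]
    rcases hx with rfl | rfl <;> omega
  have hsum : FF l ct = ∑ m ∈ ({-j, j} : Finset ℤ), ct m • Fv l m := by
    rw [FF]
    rw [Finset.sum_subset hsub]
    intro x hx hnx
    rw [hvanish x hx hnx, zero_smul]
  -- G := Fv l (-j) + Fv l j ∈ L
  have hG : Fv l (-j) + Fv l j ∈ L := by
    rcases eq_or_ne j 0 with rfl | hj0
    · have hone : ({-(0:ℤ), (0:ℤ)} : Finset ℤ) = {0} := by decide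
      rw [hone] at hsum
      rw [Finset.sum_singleton] at hsum
      have hFv : Fv l 0 = (ct 0)⁻¹ • FF l ct := by
        rw [hsum, inv_smul_smul₀ hK]
      have h0 : Fv l 0 ∈ L := by rw [hFv]; exact L.smul_mem _ hFF
      rw [neg_zero]
      exact L.add_mem h0 h0
    · have hpair : FF l ct = ct j • (Fv l (-j) + Fv l j) := by
        rw [hsum, Finset.sum_pair (by omega : -j ≠ j), hcteven, smul_add]
      have : Fv l (-j) + Fv l j = (ct j)⁻¹ • FF l ct := by
        rw [hpair, inv_smul_smul₀ hK]
      rw [this]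
      exact L.smul_mem _ hFF
  -- final bracket with Am
  have hlne : (-(2*(l:ℝ)+2)) ≠ 0 := by
    have : (0:ℝ) ≤ (l:ℝ) := Nat.cast_nonneg l
    intro h; nlinarith
  have hbr : ⁅Am l, Fv l (-j) + Fv l j⁆
      = (-(2*(l:ℝ)+2)) • (Ev l (-j) + Ev l j) := by
    rw [lie_add, lie_A_Fv l (-j) (by omega) (by omega), lie_A_Fv l j (by omega) hj2,
      ← smul_add, show (-(2*(l:ℂ)+2)) = (((-(2*(l:ℝ)+2)) : ℝ) : ℂ) by push_cast; ring,
      real_smul_mat]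
  have htarget : Em l ((l : ℤ), -j) ((l : ℤ) + 1, -j) + Em l ((l : ℤ), j) ((l : ℤ) + 1, j)
      = (-(2*(l:ℝ)+2))⁻¹ • ⁅Am l, Fv l (-j) + Fv l j⁆ := by
    rw [hbr, inv_smul_smul₀ hlne]
    rfl
  rw [htarget]
  exact L.smul_mem _ (L.lie_mem hAm hG)
end

section
/- The matrices B₁, B₂ and A satisfy B₂ − [A, B₁]/(2(ℓ+1)) = 2 Σ_{m=−ℓ}^{ℓ} q_{ℓ,−m} E_{(ℓ,m),(ℓ+1,m+1)} and B₂ + [A, B₁]/(2(ℓ+1)) = 2 Σ_{m=−ℓ}^{ℓ} q_{ℓ,m} E_{(ℓ,m),(ℓ+1,m−1)}. -/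
open Matrix

section

attribute [local instance 100] LieRing.ofAssociativeRing

noncomputable def dval (l : ℕ) (x : ↥(Jset l)) : ℂ :=
  if (x : ℤ × ℤ).1 = (l : ℤ) then Complex.I * (2 * (l : ℂ) + 3) / 2
  else -(Complex.I * (2 * (l : ℂ) + 1) / 2)

lemma Am_diag (l : ℕ) : Am l = Matrix.diagonal (dval l) := by
  ext x y
  obtain ⟨hx1, hx2⟩ : ((x : ℤ × ℤ).1 = (l : ℤ) ∨ (x : ℤ × ℤ).1 = (l : ℤ) + 1) ∧
      (-(x : ℤ × ℤ).1 ≤ (x : ℤ × ℤ).2 ∧ (x : ℤ × ℤ).2 ≤ (x : ℤ × ℤ).1) := by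
    have := x.2
    simp only [Jset, Finset.mem_filter, Finset.mem_product, Finset.mem_insert,
      Finset.mem_singleton, Finset.mem_Icc] at this
    exact ⟨this.1.1, this.2⟩
  simp only [Am, Matrix.add_apply, Matrix.sum_apply, Matrix.smul_apply, eM,
    Matrix.diagonal_apply, dval, smul_eq_mul, mul_ite, mul_one, mul_zero]
  by_cases hxy : x = y
  · subst hxy
    rw [if_pos rfl]
    rcases hx1 with h | h
    · rw [if_pos h]
      have h1 : ∀ k ∈ Finset.Icc (-(l:ℤ)) (l:ℤ),
          (if (x : ℤ × ℤ) = ((l:ℤ), k) ∧ (x : ℤ × ℤ) = ((l:ℤ), k) then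
            Complex.I * (2 * (l : ℂ) + 3) / 2 else 0)
          = if k = (x : ℤ × ℤ).2 then Complex.I * (2 * (l : ℂ) + 3) / 2 else 0 := by
        intro k _
        congr 1
        simp [Prod.ext_iff, h, eq_comm, and_self]
      rw [Finset.sum_congr rfl h1, Finset.sum_ite_eq' _ _ (fun _ => Complex.I * (2 * (l : ℂ) + 3) / 2)]
      have hmem : (x : ℤ × ℤ).2 ∈ Finset.Icc (-(l:ℤ)) (l:ℤ) := by
        rw [Finset.mem_Icc]; omega
      rw [if_pos hmem]
      have h2 : ∀ k ∈ Finset.Icc (-((l:ℤ)+1)) ((l:ℤ)+1),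
          (if (x : ℤ × ℤ) = ((l:ℤ)+1, k) ∧ (x : ℤ × ℤ) = ((l:ℤ)+1, k) then
            -(Complex.I * (2 * (l : ℂ) + 1) / 2) else 0) = 0 := by
        intro k _
        rw [if_neg]
        simp only [Prod.ext_iff, h, not_and]
        intro h'
        omega
      rw [Finset.sum_congr rfl h2, Finset.sum_const_zero, add_zero]
    · have hne : (x : ℤ × ℤ).1 ≠ (l : ℤ) := by omega
      rw [if_neg hne]
      have h1 : ∀ k ∈ Finset.Icc (-(l:ℤ)) (l:ℤ),
          (if (x : ℤ × ℤ) = ((l:ℤ), k) ∧ (x : ℤ × ℤ) = ((l:ℤ), k) then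
            Complex.I * (2 * (l : ℂ) + 3) / 2 else 0) = 0 := by
        intro k _
        rw [if_neg]
        simp only [Prod.ext_iff, not_and]
        intro h'
        omega
      have h2 : ∀ k ∈ Finset.Icc (-((l:ℤ)+1)) ((l:ℤ)+1),
          (if (x : ℤ × ℤ) = ((l:ℤ)+1, k) ∧ (x : ℤ × ℤ) = ((l:ℤ)+1, k) then
            -(Complex.I * (2 * (l : ℂ) + 1) / 2) else 0)
          = if k = (x : ℤ × ℤ).2 then -(Complex.I * (2 * (l : ℂ) + 1) / 2) else 0 := by
        intro k _
        congr 1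
        simp [Prod.ext_iff, h, eq_comm, and_self]
      rw [Finset.sum_congr rfl h1, Finset.sum_const_zero, zero_add,
        Finset.sum_congr rfl h2, Finset.sum_ite_eq' _ _ (fun _ => -(Complex.I * (2 * (l : ℂ) + 1) / 2))]
      have hmem : (x : ℤ × ℤ).2 ∈ Finset.Icc (-((l:ℤ)+1)) ((l:ℤ)+1) := by
        rw [Finset.mem_Icc]; omega
      rw [if_pos hmem]
  · rw [if_neg hxy]
    have hvne : (x : ℤ × ℤ) ≠ (y : ℤ × ℤ) := fun h => hxy (Subtype.ext h)
    have h1 : ∀ (a : ℤ × ℤ) (c : ℂ), (if (x : ℤ × ℤ) = a ∧ (y : ℤ × ℤ) = a then c else 0) = 0 := by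
      intro a c
      rw [if_neg]
      rintro ⟨h1, h2⟩
      exact hvne (h1.trans h2.symm)
    simp only [h1, Finset.sum_const_zero, add_zero]

lemma lie_Am_eM (l : ℕ) (a b : ℤ × ℤ) (ha : a.1 = (l : ℤ)) (hb : b.1 = (l : ℤ) + 1) :
    ⁅Am l, eM l a b⁆ = (Complex.I * (2 * (l : ℂ) + 2)) • eM l a b := by
  rw [Am_diag, Ring.lie_def]
  ext x y
  simp only [Matrix.sub_apply, Matrix.diagonal_mul, Matrix.mul_diagonal, Matrix.smul_apply,
    smul_eq_mul]
  by_cases h : (x : ℤ × ℤ) = a ∧ (y : ℤ × ℤ) = b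
  · have hdx : dval l x = Complex.I * (2 * (l : ℂ) + 3) / 2 := by
      rw [dval, if_pos (by rw [h.1, ha])]
    have hdy : dval l y = -(Complex.I * (2 * (l : ℂ) + 1) / 2) := by
      rw [dval, if_neg (by rw [h.2, hb]; omega)]
    rw [eM, if_pos h, hdx, hdy]
    ring
  · rw [eM]
    simp only [if_neg h, mul_zero, zero_mul, sub_zero, mul_zero]


lemma lie_Am_eM' (l : ℕ) (a b : ℤ × ℤ) (ha : a.1 = (l : ℤ)) (hb : b.1 = (l : ℤ) + 1) :
    ⁅Am l, eM l b a⁆ = (-(Complex.I * (2 * (l : ℂ) + 2))) • eM l b a := by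
  rw [Am_diag, Ring.lie_def]
  ext x y
  simp only [Matrix.sub_apply, Matrix.diagonal_mul, Matrix.mul_diagonal, Matrix.smul_apply,
    smul_eq_mul]
  by_cases h : (x : ℤ × ℤ) = b ∧ (y : ℤ × ℤ) = a
  · have hdx : dval l x = -(Complex.I * (2 * (l : ℂ) + 1) / 2) := by
      rw [dval, if_neg (by rw [h.1, hb]; omega)]
    have hdy : dval l y = Complex.I * (2 * (l : ℂ) + 3) / 2 := by
      rw [dval, if_pos (by rw [h.2, ha])]
    rw [eM, if_pos h, hdx, hdy]
    ring
  · rw [eM]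
    simp only [if_neg h, mul_zero, zero_mul, sub_zero, mul_zero]


lemma lie_Am_Fm (l : ℕ) (a b : ℤ × ℤ) (ha : a.1 = (l : ℤ)) (hb : b.1 = (l : ℤ) + 1) :
    ⁅Am l, Fm l a b⁆ = (-(2 * (l : ℝ) + 2)) • Em l a b := by
  rw [Fm, lie_add, lie_smul, lie_smul, lie_Am_eM l a b ha hb, lie_Am_eM' l a b ha hb, Em]
  ext x y
  simp only [Matrix.add_apply, Matrix.smul_apply, Matrix.sub_apply, smul_eq_mul,
    Complex.real_smul]
  push_cast
  ring_nf
  simp [Complex.I_sq]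
  ring

lemma lie_sum' (l : ℕ) (s : Finset ℤ) (f : ℤ → Mat l) (A : Mat l) :
    ⁅A, ∑ m ∈ s, f m⁆ = ∑ m ∈ s, ⁅A, f m⁆ := by
  simp only [Ring.lie_def, Finset.mul_sum, Finset.sum_mul, ← Finset.sum_sub_distrib]

lemma bracket_B1 (l : ℕ) :
    (2 * ((l : ℝ) + 1))⁻¹ • ⁅Am l, B1 l⁆ =
      ∑ m ∈ Finset.Icc (-(l : ℤ)) (l : ℤ),
        (qc l m • Em l ((l : ℤ), m) ((l : ℤ) + 1, m - 1)
          - qc l (-m) • Em l ((l : ℤ), m) ((l : ℤ) + 1, m + 1)) := by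
  have hne : (2 * ((l : ℝ) + 1)) ≠ 0 := by positivity
  rw [B1, lie_sum', Finset.smul_sum]
  refine Finset.sum_congr rfl fun m _ => ?_
  rw [lie_add, lie_smul, lie_smul, lie_Am_Fm l _ _ rfl rfl, lie_Am_Fm l _ _ rfl rfl]
  have h1 : (2 * ((l : ℝ) + 1))⁻¹ * -qc l m * -(2 * (l : ℝ) + 2) = qc l m := by
    field_simp
  have h2 : (2 * ((l : ℝ) + 1))⁻¹ * qc l (-m) * -(2 * (l : ℝ) + 2) = -qc l (-m) := by
    field_simp
  rw [smul_add, smul_smul, smul_smul, smul_smul, smul_smul, h1, h2, neg_smul,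
    ← sub_eq_add_neg]

end

/-- `B₂ - [A,B₁]/(2(ℓ+1)) = 2 ∑_{m=-ℓ}^{ℓ} q_{ℓ,-m} E_{(ℓ,m),(ℓ+1,m+1)}` and
`B₂ + [A,B₁]/(2(ℓ+1)) = 2 ∑_{m=-ℓ}^{ℓ} q_{ℓ,m} E_{(ℓ,m),(ℓ+1,m-1)}`. -/
theorem B2_pm_bracket (l : ℕ) :
    B2 l - (2 * ((l : ℝ) + 1))⁻¹ • ⁅Am l, B1 l⁆ =
        (2 : ℝ) • ∑ m ∈ Finset.Icc (-(l : ℤ)) (l : ℤ),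
          qc l (-m) • Em l ((l : ℤ), m) ((l : ℤ) + 1, m + 1) ∧
      B2 l + (2 * ((l : ℝ) + 1))⁻¹ • ⁅Am l, B1 l⁆ =
        (2 : ℝ) • ∑ m ∈ Finset.Icc (-(l : ℤ)) (l : ℤ),
          qc l m • Em l ((l : ℤ), m) ((l : ℤ) + 1, m - 1) := by
  constructor
  · rw [bracket_B1, B2, ← Finset.sum_sub_distrib, Finset.smul_sum]
    refine Finset.sum_congr rfl fun m _ => ?_
    module
  · rw [bracket_B1, B2, ← Finset.sum_add_distrib, Finset.smul_sum]
    refine Finset.sum_congr rfl fun m _ => ?_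
    module
end
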